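/- arXiv:1206.0493 — 6 statements merged into one kernel-verified Lean document; each statement's English description precedes it below -/
import Mathlib

section
/- For any almost periodic function f on ℝ, the asymptotic mean value M(f) = lim_{T→∞} (1/2T) ∫_{-T}^{T} f(t) dt exists and equals the integral of the canonical extension of f over the Bohr compactification bℝ with respect to the normalized Haar measure. -/
open MeasureTheory Filter

/-- `f : ℝ → ℂ` is almost periodic: bounded, continuous, and for every `ε > 0` the set of
`ε`-almost periods is relatively dense. -/
def IsAlmostPeriodic (f : ℝ → ℂ) : Prop :=
  Continuous f ∧ (∃ C : ℝ, ∀ x : ℝ, ‖f x‖ ≤ C) ∧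
    ∀ ε : ℝ, 0 < ε → ∃ l : ℝ, 0 < l ∧ ∀ a : ℝ, ∃ τ ∈ Set.Icc a (a + l),
      ∀ x : ℝ, ‖f (x + τ) - f x‖ < ε

/-- Shifting an almost periodic function by any `s` changes its integral over `[-T, T]`
by at most `ε * 2T + 2Cl`. -/
lemma IsAlmostPeriodic.shift_bound {f : ℝ → ℂ} (hc : Continuous f) {C : ℝ}
    (hC : ∀ x, ‖f x‖ ≤ C) {ε l : ℝ}
    (hl : ∀ a : ℝ, ∃ τ ∈ Set.Icc a (a + l), ∀ x : ℝ, ‖f (x + τ) - f x‖ < ε)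
    (s T : ℝ) (hT : 0 ≤ T) :
    ‖(∫ t in (-T)..T, f (t + s)) - ∫ t in (-T)..T, f t‖ ≤ ε * (2 * T) + 2 * (C * l) := by
  have hC0 : 0 ≤ C := le_trans (norm_nonneg _) (hC 0)
  obtain ⟨τ, hτ, hτε⟩ := hl (s - l)
  set δ := s - τ with hδ
  have hδ0 : 0 ≤ δ := by simp only [hδ]; linarith [hτ.2]
  have hδl : δ ≤ l := by simp only [hδ]; linarith [hτ.1]
  have hint : ∀ a b : ℝ, IntervalIntegrable f volume a b := fun a b => hc.intervalIntegrable a b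
  have hintτ : ∀ a b : ℝ, IntervalIntegrable (fun u => f (u + τ)) volume a b :=
    fun a b => (hc.comp (continuous_add_right τ)).intervalIntegrable a b
  have h1 : (∫ t in (-T)..T, f (t + s)) = ∫ u in (-T + δ)..(T + δ), f (u + τ) := by
    have : (∫ t in (-T)..T, f (t + s)) = ∫ t in (-T)..T, (fun u => f (u + τ)) (t + δ) := by
      apply intervalIntegral.integral_congr
      intro x _
      simp only [hδ]
      ring_nf
    rw [this, intervalIntegral.integral_comp_add_right (fun u => f (u + τ)) δ]
  rw [h1]
  have key : (∫ u in (-T + δ)..(T + δ), f (u + τ)) - ∫ t in (-T)..T, f t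
      = (∫ u in (-T + δ)..(T + δ), (f (u + τ) - f u))
        + ((∫ u in T..(T + δ), f u) - ∫ u in (-T)..(-T + δ), f u) := by
    rw [intervalIntegral.integral_sub (hintτ _ _) (hint _ _)]
    have e1 : (∫ u in (-T + δ)..T, f u) + ∫ u in T..(T + δ), f u
        = ∫ u in (-T + δ)..(T + δ), f u :=
      intervalIntegral.integral_add_adjacent_intervals (hint _ _) (hint _ _)
    have e2 : (∫ u in (-T)..(-T + δ), f u) + ∫ u in (-T + δ)..T, f u
        = ∫ u in (-T)..T, f u :=
      intervalIntegral.integral_add_adjacent_intervals (hint _ _) (hint _ _)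
    rw [← e1, ← e2]
    ring
  rw [key]
  have b1 : ‖∫ u in (-T + δ)..(T + δ), (f (u + τ) - f u)‖ ≤ ε * (2 * T) := by
    have := intervalIntegral.norm_integral_le_of_norm_le_const
      (a := -T + δ) (b := T + δ) (C := ε) (f := fun u => f (u + τ) - f u)
      (fun x _ => le_of_lt (hτε x))
    calc ‖∫ u in (-T + δ)..(T + δ), (f (u + τ) - f u)‖ ≤ ε * |T + δ - (-T + δ)| := this
      _ = ε * (2 * T) := by rw [show T + δ - (-T + δ) = 2 * T by ring, abs_of_nonneg (by linarith)]
  have b2 : ‖∫ u in T..(T + δ), f u‖ ≤ C * l := by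
    have := intervalIntegral.norm_integral_le_of_norm_le_const
      (a := T) (b := T + δ) (C := C) (f := f) (fun x _ => hC x)
    calc ‖∫ u in T..(T + δ), f u‖ ≤ C * |T + δ - T| := this
      _ ≤ C * l := by
          rw [show T + δ - T = δ by ring, abs_of_nonneg hδ0]
          exact mul_le_mul_of_nonneg_left hδl hC0
  have b3 : ‖∫ u in (-T)..(-T + δ), f u‖ ≤ C * l := by
    have := intervalIntegral.norm_integral_le_of_norm_le_const
      (a := -T) (b := -T + δ) (C := C) (f := f) (fun x _ => hC x)
    calc ‖∫ u in (-T)..(-T + δ), f u‖ ≤ C * |(-T + δ) - (-T)| := this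
      _ ≤ C * l := by
          rw [show (-T + δ) - (-T) = δ by ring, abs_of_nonneg hδ0]
          exact mul_le_mul_of_nonneg_left hδl hC0
  calc ‖(∫ u in (-T + δ)..(T + δ), (f (u + τ) - f u))
        + ((∫ u in T..(T+δ), f u) - ∫ u in (-T)..(-T+δ), f u)‖
      ≤ ‖∫ u in (-T + δ)..(T + δ), (f (u + τ) - f u)‖
        + ‖(∫ u in T..(T+δ), f u) - ∫ u in (-T)..(-T+δ), f u‖ := norm_add_le _ _
    _ ≤ ε * (2 * T) + (C * l + C * l) := by
        gcongr
        exact le_trans (norm_sub_le _ _) (add_le_add b2 b3)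
    _ = ε * (2 * T) + 2 * (C * l) := by ring

/-- For an almost periodic `f` on `ℝ`, the asymptotic mean value
`lim_{T→∞} (1/2T)∫_{-T}^{T} f` exists and equals the Haar integral over the Bohr
compactification `B` of `ℝ` of the canonical extension `F` of `f`. -/
theorem meanValue_eq_haar_integral
    {B : Type*} [TopologicalSpace B] [CompactSpace B] [AddCommGroup B]
    [IsTopologicalAddGroup B] [MeasurableSpace B] [BorelSpace B]
    (ι : ℝ →+ B) (hιc : Continuous ι) (hιdense : DenseRange ι)
    (h : Measure B) [IsProbabilityMeasure h] [Measure.IsAddHaarMeasure h]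
    (f : ℝ → ℂ) (hf : IsAlmostPeriodic f)
    (F : C(B, ℂ)) (hF : ∀ t : ℝ, F (ι t) = f t) :
    Tendsto (fun T : ℝ => (1 / (2 * T)) • ∫ t in (-T)..T, f t)
      atTop (nhds (∫ κ, F κ ∂h)) := by
  obtain ⟨hcont, ⟨C, hC⟩, hap⟩ := hf
  have hC0 : 0 ≤ C := le_trans (norm_nonneg _) (hC 0)
  -- the Fubini/Haar-invariance identity
  have key : ∀ T : ℝ, 0 < T →
      (∫ κ, F κ ∂h) = (1 / (2 * T)) • ∫ κ, (∫ t in (-T)..T, F (κ + ι t)) ∂h := by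
    intro T hT
    have hTT : (-T : ℝ) ≤ T := by linarith
    have hFc : ∀ t : ℝ, Continuous fun κ : B => F (κ + ι t) :=
      fun t => F.continuous.comp (continuous_id.add continuous_const)
    have meas : StronglyMeasurable (Function.uncurry fun (t : ℝ) (κ : B) => F (κ + ι t)) := by
      apply stronglyMeasurable_uncurry_of_continuous_of_stronglyMeasurable
      · exact fun κ => F.continuous.comp (continuous_const.add hιc)
      · exact fun t => (hFc t).stronglyMeasurable
    have int : Integrable (Function.uncurry fun (t : ℝ) (κ : B) => F (κ + ι t))
        ((volume.restrict (Set.Ioc (-T) T)).prod h) := by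
      refine (integrable_const ‖F‖).mono' meas.aestronglyMeasurable ?_
      filter_upwards with p
      exact F.norm_coe_le_norm _
    have swap := integral_integral_swap int
    have inner_eq : ∀ t : ℝ, (∫ κ, F (κ + ι t) ∂h) = ∫ κ, F κ ∂h :=
      fun t => integral_add_right_eq_self (fun κ => F κ) (ι t)
    have lhs_eq : ∫ (t : ℝ) in Set.Ioc (-T) T, (∫ κ, F (κ + ι t) ∂h)
        = (2 * T) • ∫ κ, F κ ∂h := by
      simp only [inner_eq]
      rw [setIntegral_const]
      congr 1
      rw [measureReal_def, Real.volume_Ioc, ENNReal.toReal_ofReal (by linarith)]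
      ring
    have : ∫ κ, (∫ t in (-T)..T, F (κ + ι t)) ∂h = (2 * T) • ∫ κ, F κ ∂h := by
      simp only [intervalIntegral.integral_of_le hTT]
      rw [← swap, lhs_eq]
    rw [this, smul_smul, one_div_mul_cancel (by positivity), one_smul]
  rw [Metric.tendsto_atTop]
  intro ε hε
  obtain ⟨l, hl0, hl⟩ := hap (ε / 3) (by positivity)
  refine ⟨max 1 (3 * (C * l) / ε), fun T hT => ?_⟩
  have hT1 : (1 : ℝ) ≤ T := le_trans (le_max_left _ _) hT
  have hT0 : 0 < T := by linarith
  have hTc : 3 * (C * l) / ε ≤ T := le_trans (le_max_right _ _) hT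
  have hClT : C * l / T ≤ ε / 3 := by
    rw [div_le_div_iff₀ hT0 (by norm_num : (0:ℝ) < 3)]
    have := (div_le_iff₀ hε).mp hTc
    nlinarith
  -- continuity of the inner integral in κ
  have hFc : Continuous (Function.uncurry fun (κ : B) (t : ℝ) => F (κ + ι t)) :=
    F.continuous.comp (continuous_fst.add (hιc.comp continuous_snd))
  have Dcont : Continuous fun κ : B => ∫ t in (-T)..T, F (κ + ι t) :=
    intervalIntegral.continuous_parametric_intervalIntegral_of_continuous' hFc (-T) T
  set c : ℂ := ∫ t in (-T)..T, f t with hc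
  set g : B → ℂ := fun κ => (∫ t in (-T)..T, F (κ + ι t)) - c with hg
  have hgc : Continuous g := Dcont.sub continuous_const
  -- pointwise bound on g, first on the dense range, then everywhere
  have hgbound : ∀ κ : B, ‖g κ‖ ≤ ε / 3 * (2 * T) + 2 * (C * l) := by
    have hclosed : IsClosed {κ : B | ‖g κ‖ ≤ ε / 3 * (2 * T) + 2 * (C * l)} :=
      isClosed_le hgc.norm continuous_const
    have hrange : ∀ s : ℝ, ‖g (ι s)‖ ≤ ε / 3 * (2 * T) + 2 * (C * l) := by
      intro s
      have : g (ι s) = (∫ t in (-T)..T, f (t + s)) - ∫ t in (-T)..T, f t := by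
        simp only [hg, hc]
        congr 1
        apply intervalIntegral.integral_congr
        intro x _
        show F (ι s + ι x) = f (x + s)
        rw [← map_add ι s x, hF, add_comm s x]
      rw [this]
      exact IsAlmostPeriodic.shift_bound hcont hC hl s T hT0.le
    intro κ
    have : κ ∈ closure (Set.range ι) := by rw [hιdense.closure_range]; trivial
    exact closure_minimal (Set.range_subset_iff.mpr hrange) hclosed this
  -- integrability of the inner integral over h
  have hDint : Integrable (fun κ : B => ∫ t in (-T)..T, F (κ + ι t)) h := by
    refine (integrable_const (‖F‖ * |T - (-T)|)).mono' Dcont.aestronglyMeasurable ?_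
    filter_upwards with κ
    exact intervalIntegral.norm_integral_le_of_norm_le_const fun x _ => F.norm_coe_le_norm _
  have hgint : ‖∫ κ, g κ ∂h‖ ≤ ε / 3 * (2 * T) + 2 * (C * l) := by
    have := MeasureTheory.norm_integral_le_of_norm_le_const (μ := h)
      (ae_of_all _ hgbound)
    simpa [measure_univ] using this
  have hsub : c - (∫ κ, (∫ t in (-T)..T, F (κ + ι t)) ∂h) = - ∫ κ, g κ ∂h := by
    rw [hg]
    rw [integral_sub hDint (integrable_const c), integral_const]
    simp only [measureReal_def, measure_univ, ENNReal.toReal_one, one_smul]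
    ring
  rw [dist_eq_norm, key T hT0, ← smul_sub, hsub, norm_smul, norm_neg]
  have h2T : (0:ℝ) < 2 * T := by linarith
  calc ‖(1 / (2 * T))‖ * ‖∫ κ, g κ ∂h‖
      = (1 / (2 * T)) * ‖∫ κ, g κ ∂h‖ := by
        rw [Real.norm_eq_abs, abs_of_pos (by positivity)]
    _ ≤ (1 / (2 * T)) * (ε / 3 * (2 * T) + 2 * (C * l)) := by
        exact mul_le_mul_of_nonneg_left hgint (by positivity)
    _ = ε / 3 + C * l / T := by field_simp
    _ < ε := by linarith
end

section
/- If A is an invariant Borel subset of a compact abelian group G under the translation action of a dense subgroup H (i.e., A + x = A for all x ∈ H), then the normalized Haar measure of A satisfies h(A) = h(A)², and hence h(A) ∈ {0,1}. -/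
open MeasureTheory Filter

/-- If `A` is a Borel subset of a compact abelian group `G` invariant under translation by
every element of a dense subgroup `H`, then the normalized Haar measure of `A` satisfies
`h(A) = h(A)²`, and hence `h(A) ∈ {0,1}`. -/
theorem invariant_set_measure_idempotent
    {G : Type*} [TopologicalSpace G] [CompactSpace G] [AddCommGroup G]
    [IsTopologicalAddGroup G] [MeasurableSpace G] [BorelSpace G]
    (h : Measure G) [IsProbabilityMeasure h] [Measure.IsAddHaarMeasure h]
    (H : AddSubgroup G) (hHdense : Dense (H : Set G))
    (A : Set G) (hA : MeasurableSet A)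
    (hinv : ∀ x ∈ H, (fun g => g + x) ⁻¹' A = A) :
    h A = h A * h A ∧ (h A = 0 ∨ h A = 1) := by
  -- the family of translations, as a continuous family of continuous maps
  set F : C(G × G, G) := ⟨fun p => p.1 + p.2, continuous_add⟩ with hF
  -- the set of `z` such that translation by `z` a.e. preserves `A` is closed
  have hclosed : IsClosed {z : G | F.curry z ⁻¹' A =ᵐ[h] A} := by
    refine isClosed_setOf_preimage_ae_eq (μ := h) (ν := h) F.curry.continuous
      (fun z => ?_) A hA.nullMeasurableSet (measure_ne_top _ _)
    exact measurePreserving_add_left h z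
  -- it contains the dense subgroup `H`
  have hsub : (H : Set G) ⊆ {z : G | F.curry z ⁻¹' A =ᵐ[h] A} := by
    intro x hx
    have : F.curry x ⁻¹' A = A := by
      conv_rhs => rw [← hinv x hx]
      ext g
      simp [F, add_comm]
    simp [Set.mem_setOf_eq, this]
    exact EventuallyEq.rfl
  -- hence it is everything
  have hall : ∀ z : G, (fun g => z + g) ⁻¹' A =ᵐ[h] A := by
    intro z
    have : {z : G | F.curry z ⁻¹' A =ᵐ[h] A} = Set.univ := by
      apply Set.eq_univ_of_forall
      intro z
      have := (hHdense.mono hsub).closure_eq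
      rw [hclosed.closure_eq] at this
      simp [this]
    have hz : z ∈ {z : G | F.curry z ⁻¹' A =ᵐ[h] A} := this ▸ Set.mem_univ z
    exact hz
  -- therefore `h.restrict A` is a left-invariant measure
  have hli : (h.restrict A).IsAddLeftInvariant := by
    constructor
    intro z
    have hm : Measurable (fun g : G => z + g) := measurable_const_add z
    calc Measure.map (fun g => z + g) (h.restrict A)
        = Measure.map (fun g => z + g) (h.restrict ((fun g => z + g) ⁻¹' A)) := by
          rw [Measure.restrict_congr_set (hall z)]
      _ = (Measure.map (fun g => z + g) h).restrict A := by
          rw [Measure.restrict_map hm hA]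
      _ = h.restrict A := by
          rw [map_add_left_eq_self h z]
  -- by uniqueness of Haar measure, `h.restrict A = c • h`
  have key := Measure.isAddInvariant_eq_smul_of_compactSpace (h.restrict A) h
  set c := Measure.addHaarScalarFactor (h.restrict A) h with hc
  have huniv : h A = (c : ENNReal) := by
    have := congrArg (fun μ : Measure G => μ Set.univ) key
    simp only [Measure.smul_apply, Measure.restrict_apply_univ, measure_univ, ENNReal.smul_def, smul_eq_mul, mul_one] at this
    exact this
  have hAA : h A = (c : ENNReal) * h A := by
    have := congrArg (fun μ : Measure G => μ A) key
    simp only [Measure.smul_apply, Measure.restrict_apply_self, ENNReal.smul_def, smul_eq_mul] at this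
    exact this
  have hsq : h A = h A * h A := by rw [← huniv] at hAA; exact hAA
  refine ⟨hsq, ?_⟩
  rcases eq_or_ne (h A) 0 with h0 | h0
  · exact Or.inl h0
  · exact Or.inr ((ENNReal.mul_eq_left h0 (measure_ne_top _ _)).mp hsq.symm)
end

section
/- If ω₁, …, ω_k are real numbers that are linearly independent over ℚ, then for any nonnegative integers l₁, …, l_k, the asymptotic mean value M(∏_{j=1}^k cos(ω_j t)^{l_j}) equals ∏_{j=1}^k M(cos(ω_j t)^{l_j}); consequently the functions cos(ω₁ t), …, cos(ω_k t) are stochastically independent with respect to the Haar measure of the Bohr compactification of ℝ. -/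
open MeasureTheory Filter

/-- The asymptotic mean value of a real-valued function on `ℝ`. -/
def HasMeanValue (f : ℝ → ℝ) (A : ℝ) : Prop :=
  Tendsto (fun T : ℝ => (1 / (2 * T)) * ∫ t in (-T)..T, f t) atTop (nhds A)

lemma hasMeanValue_cos (a : ℝ) :
    HasMeanValue (fun t => Real.cos (a * t)) (if a = 0 then 1 else 0) := by
  unfold HasMeanValue
  rcases eq_or_ne a 0 with rfl | ha
  · simp only [if_pos rfl, zero_mul, Real.cos_zero, ↓reduceIte]
    apply Tendsto.congr' _ tendsto_const_nhds
    filter_upwards [eventually_gt_atTop (0:ℝ)] with T hT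
    rw [intervalIntegral.integral_const]
    simp only [smul_eq_mul, mul_one]
    field_simp
    ring
  · rw [if_neg ha]
    have key : ∀ T : ℝ, (∫ t in (-T)..T, Real.cos (a * t)) = (Real.sin (a*T) - Real.sin (a*(-T)))/a := by
      intro T
      rw [intervalIntegral.integral_comp_mul_left (fun x => Real.cos x) ha, integral_cos]
      simp [div_eq_inv_mul]
    apply squeeze_zero_norm' (a := fun T => |a|⁻¹ * T⁻¹)
    · filter_upwards [eventually_gt_atTop (0:ℝ)] with T hT
      rw [key, Real.norm_eq_abs, abs_mul]
      have h1 : |Real.sin (a*T) - Real.sin (a*(-T))| ≤ 2 := by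
        have := Real.neg_one_le_sin (a*T); have := Real.sin_le_one (a*T)
        have := Real.neg_one_le_sin (a*(-T)); have := Real.sin_le_one (a*(-T))
        rw [abs_sub_le_iff]; constructor <;> linarith
      have h2 : |1/(2*T)| = 1/(2*T) := abs_of_pos (by positivity)
      rw [h2, abs_div]
      have ha' : (0:ℝ) < |a| := abs_pos.mpr ha
      calc 1/(2*T) * (|Real.sin (a*T) - Real.sin (a*(-T))| / |a|)
          ≤ 1/(2*T) * (2 / |a|) := by
            gcongr
        _ = |a|⁻¹ * T⁻¹ := by field_simp
    · have : Tendsto (fun T : ℝ => T⁻¹) atTop (nhds 0) := tendsto_inv_atTop_zero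
      simpa using this.const_mul |a|⁻¹

lemma hasMeanValue_congr {f g : ℝ → ℝ} {A : ℝ} (h : ∀ t, f t = g t)
    (hf : HasMeanValue f A) : HasMeanValue g A := by
  have : f = g := funext h
  rwa [← this]

lemma hasMeanValue_sum_cos {ι : Type*} (s : Finset ι) (c : ι → ℝ) (ν : ι → ℝ)
    (M : ι → ℝ) (hM : ∀ i ∈ s, HasMeanValue (fun t => Real.cos (ν i * t)) (M i)) :
    HasMeanValue (fun t => ∑ i ∈ s, c i * Real.cos (ν i * t)) (∑ i ∈ s, c i * M i) := by
  unfold HasMeanValue at *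
  have key : ∀ T : ℝ, (1 / (2*T)) * ∫ t in (-T)..T, ∑ i ∈ s, c i * Real.cos (ν i * t)
      = ∑ i ∈ s, c i * ((1/(2*T)) * ∫ t in (-T)..T, Real.cos (ν i * t)) := by
    intro T
    rw [intervalIntegral.integral_finset_sum]
    · rw [Finset.mul_sum]
      refine Finset.sum_congr rfl fun i _ => ?_
      rw [intervalIntegral.integral_const_mul]; ring
    · intro i _
      exact (Continuous.intervalIntegrable (by continuity) _ _)
  simp only [key]
  exact tendsto_finset_sum _ fun i hi => ((hM i hi).const_mul (c i))

lemma complex_cos_pow (z : ℂ) (l : ℕ) :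
    Complex.cos z ^ l = ∑ r ∈ Finset.range (l+1),
      ((l.choose r : ℂ) / 2^l) * Complex.exp ((2*(r:ℂ) - (l:ℂ)) * z * Complex.I) := by
  have hcos : Complex.cos z = (Complex.exp (z * Complex.I) + Complex.exp (-z * Complex.I)) / 2 := rfl
  rw [hcos, div_pow, add_pow]
  rw [Finset.sum_div]
  refine Finset.sum_congr rfl fun r hr => ?_
  have hrl : r ≤ l := Nat.lt_succ_iff.mp (Finset.mem_range.mp hr)
  rw [← Complex.exp_nat_mul, ← Complex.exp_nat_mul, ← Complex.exp_add]
  have harg : (r:ℂ) * (z * Complex.I) + ((l - r : ℕ):ℂ) * (-z * Complex.I)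
      = (2*(r:ℂ) - (l:ℂ)) * z * Complex.I := by
    have : ((l - r : ℕ):ℂ) = (l:ℂ) - (r:ℂ) := by push_cast [hrl]; ring
    rw [this]; ring
  rw [harg]; ring

/-- Real expansion of a single power of cosine. -/
lemma cos_pow_expand (a t : ℝ) (l : ℕ) :
    Real.cos (a * t) ^ l = ∑ r ∈ Finset.range (l+1),
      ((l.choose r : ℝ) / 2^l) * Real.cos ((((2*(r:ℤ) - (l:ℤ)) : ℤ) : ℝ) * a * t) := by
  have hC : ((Real.cos (a*t) ^ l : ℝ) : ℂ)
      = ∑ r ∈ Finset.range (l+1), (((l.choose r : ℝ) / 2^l : ℝ) : ℂ)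
          * Complex.exp (((((((2*(r:ℤ) - (l:ℤ)) : ℤ) : ℝ) * a * t : ℝ)) : ℂ) * Complex.I) := by
    push_cast [Complex.ofReal_cos]
    rw [complex_cos_pow]
    refine Finset.sum_congr rfl fun r _ => ?_
    congr 1
    ring_nf
  have := congrArg Complex.re hC
  rw [Complex.ofReal_re, Complex.re_sum] at this
  rw [this]
  refine Finset.sum_congr rfl fun r _ => ?_
  rw [Complex.re_ofReal_mul, Complex.exp_ofReal_mul_I_re]

variable {k : ℕ} (ω : Fin k → ℝ) (l : Fin k → ℕ)

noncomputable def coeff (x : ∀ j, Fin (l j + 1)) : ℝ :=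
  ∏ j, ((l j).choose (x j) : ℝ) / 2 ^ (l j)

noncomputable def freq (x : ∀ j, Fin (l j + 1)) : ℝ :=
  ∑ j, ((2 * ((x j : ℕ) : ℤ) - (l j : ℤ) : ℤ) : ℝ) * ω j

lemma prod_cos_pow_expand (t : ℝ) :
    ∏ j, Real.cos (ω j * t) ^ l j
      = ∑ x : ∀ j, Fin (l j + 1), coeff l x * Real.cos (freq ω l x * t) := by
  have hC : ((∏ j, Real.cos (ω j * t) ^ l j : ℝ) : ℂ)
      = ∑ x : ∀ j, Fin (l j + 1), ((coeff l x : ℝ) : ℂ)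
          * Complex.exp (((freq ω l x * t : ℝ) : ℂ) * Complex.I) := by
    push_cast [Complex.ofReal_cos]
    have h1 : ∀ j : Fin k, Complex.cos ((ω j : ℂ) * (t : ℂ)) ^ l j
        = ∑ r : Fin (l j + 1), (((l j).choose r : ℂ) / 2 ^ (l j))
            * Complex.exp ((2*((r:ℕ):ℂ) - (l j : ℂ)) * ((ω j : ℂ) * t) * Complex.I) := by
      intro j
      rw [complex_cos_pow, ← Fin.sum_univ_eq_sum_range
        (fun r => (((l j).choose r : ℂ) / 2 ^ (l j))
            * Complex.exp ((2*((r:ℕ):ℂ) - (l j : ℂ)) * ((ω j : ℂ) * t) * Complex.I))]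
    simp only [h1]
    rw [Fintype.prod_sum]
    refine Finset.sum_congr rfl fun x _ => ?_
    rw [Finset.prod_mul_distrib, ← Complex.exp_sum]
    congr 1
    · unfold coeff; push_cast; rfl
    · unfold freq
      push_cast
      congr 1
      rw [Finset.sum_mul, Finset.sum_mul]
      exact Finset.sum_congr rfl fun j _ => by ring
  have := congrArg Complex.re hC
  rw [Complex.ofReal_re, Complex.re_sum] at this
  rw [this]
  refine Finset.sum_congr rfl fun x _ => ?_
  rw [Complex.re_ofReal_mul, Complex.exp_ofReal_mul_I_re]

/-- Kac: if `ω₁, …, ω_k` are rationally independent reals, then for any nonnegative integers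
`l₁, …, l_k` each `cos(ω_j t)^{l_j}` has a mean value `m_j`, and the mean value of the
product `∏_j cos(ω_j t)^{l_j}` equals `∏_j m_j`; i.e. the functions `cos(ω_j t)` are
stochastically independent with respect to the Haar measure of the Bohr compactification. -/
theorem kac_stochastic_independence_of_cosines
    (k : ℕ) (ω : Fin k → ℝ) (hind : LinearIndependent ℚ ω) (l : Fin k → ℕ) :
    ∃ m : Fin k → ℝ,
      (∀ j : Fin k, HasMeanValue (fun t => Real.cos (ω j * t) ^ l j) (m j)) ∧
      HasMeanValue (fun t => ∏ j : Fin k, Real.cos (ω j * t) ^ l j) (∏ j : Fin k, m j) := by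
  classical
  set m : Fin k → ℝ := fun j => ∑ r ∈ Finset.range (l j + 1),
      (((l j).choose r : ℝ) / 2 ^ (l j)) *
        (if (((2*(r:ℤ) - (l j : ℤ)) : ℤ) : ℝ) * ω j = 0 then 1 else 0) with hm
  refine ⟨m, ?_, ?_⟩
  · intro j
    have h := hasMeanValue_sum_cos (Finset.range (l j + 1))
      (fun r => ((l j).choose r : ℝ) / 2 ^ (l j))
      (fun r => (((2*(r:ℤ) - (l j : ℤ)) : ℤ) : ℝ) * ω j)
      (fun r => if (((2*(r:ℤ) - (l j : ℤ)) : ℤ) : ℝ) * ω j = 0 then 1 else 0)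
      (fun r _ => hasMeanValue_cos _)
    exact hasMeanValue_congr (fun t => by rw [← cos_pow_expand]) h
  · -- the product
    have h := hasMeanValue_sum_cos (Finset.univ : Finset (∀ j, Fin (l j + 1)))
      (fun x => coeff l x) (fun x => freq ω l x)
      (fun x => if freq ω l x = 0 then 1 else 0)
      (fun x _ => hasMeanValue_cos _)
    have hmean : HasMeanValue (fun t => ∏ j : Fin k, Real.cos (ω j * t) ^ l j)
        (∑ x : ∀ j, Fin (l j + 1), coeff l x * (if freq ω l x = 0 then 1 else 0)) :=
      hasMeanValue_congr (fun t => (prod_cos_pow_expand ω l t).symm) h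
    have hval : (∑ x : ∀ j, Fin (l j + 1), coeff l x * (if freq ω l x = 0 then 1 else 0))
        = ∏ j, m j := by
      have hprod : ∏ j, m j = ∑ x : ∀ j, Fin (l j + 1),
          ∏ j, ((((l j).choose (x j) : ℝ) / 2 ^ (l j)) *
            (if (((2*((x j : ℕ):ℤ) - (l j : ℤ)) : ℤ) : ℝ) * ω j = 0 then 1 else 0)) := by
        rw [hm]
        have : ∀ j : Fin k, (∑ r ∈ Finset.range (l j + 1),
            (((l j).choose r : ℝ) / 2 ^ (l j)) *
              (if (((2*(r:ℤ) - (l j : ℤ)) : ℤ) : ℝ) * ω j = 0 then 1 else 0))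
            = ∑ r : Fin (l j + 1), (((l j).choose (r:ℕ) : ℝ) / 2 ^ (l j)) *
              (if (((2*((r:ℕ):ℤ) - (l j : ℤ)) : ℤ) : ℝ) * ω j = 0 then 1 else 0) := by
          intro j
          rw [← Fin.sum_univ_eq_sum_range (fun r => (((l j).choose r : ℝ) / 2 ^ (l j)) *
              (if (((2*(r:ℤ) - (l j : ℤ)) : ℤ) : ℝ) * ω j = 0 then 1 else 0))]
        simp only [this]
        rw [Fintype.prod_sum]
      rw [hprod]
      refine Finset.sum_congr rfl fun x _ => ?_
      rw [Finset.prod_mul_distrib]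
      unfold coeff
      congr 1
      rw [Finset.prod_boole]
      -- freq = 0 ↔ all terms vanish
      have hiff : freq ω l x = 0 ↔ ∀ j : Fin k,
          (((2*((x j : ℕ):ℤ) - (l j : ℤ)) : ℤ) : ℝ) * ω j = 0 := by
        constructor
        · intro h0
          have hli := Fintype.linearIndependent_iff.mp hind
            (fun j => ((2*((x j : ℕ):ℤ) - (l j : ℤ) : ℤ) : ℚ))
          have hsum : (∑ j, ((2*((x j : ℕ):ℤ) - (l j : ℤ) : ℤ) : ℚ) • ω j) = 0 := by
            rw [← h0]
            unfold freq
            refine Finset.sum_congr rfl fun j _ => ?_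
            rw [Rat.smul_def]
            norm_cast
          intro j
          have := hli hsum j
          have hz : (2*((x j : ℕ):ℤ) - (l j : ℤ) : ℤ) = 0 := by exact_mod_cast this
          rw [hz]
          simp
        · intro hall
          unfold freq
          exact Finset.sum_eq_zero fun j _ => hall j
      by_cases hf : freq ω l x = 0
      · rw [if_pos hf, if_pos fun i _ => hiff.mp hf i]
      · rw [if_neg hf, if_neg fun hall => hf (hiff.mpr fun j => hall j (Finset.mem_univ j))]
    rwa [hval] at hmean
end

section
/- With Q_N = ∏_{k=0}^N |P_k| and the property M(∏_{j∈F}|P_j|²) = 1 for all finite index sets F, the following are equivalent: (1) M(∏_{k=0}^N |P_k|) → 0 as N → ∞; (2) inf over all finite subsequences n₁ < … < n_L of M(∏_{ℓ=1}^L |P_{n_ℓ}|) equals 0. -/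
open MeasureTheory Filter

section Aux

variable {B : Type*} [TopologicalSpace B] [CompactSpace B]
    [MeasurableSpace B] [BorelSpace B]

private lemma memL2_aux (μ : Measure B) [IsFiniteMeasure μ] {f : B → ℝ} (hf : Continuous f) :
    MemLp f (ENNReal.ofReal 2) μ := by
  have : MemLp (⟨f, hf⟩ : C(B, ℝ)) (ENNReal.ofReal 2) μ :=
    MemLp.of_bound (Continuous.aestronglyMeasurable hf) ‖(⟨f, hf⟩ : C(B, ℝ))‖
      (Filter.Eventually.of_forall fun x => ContinuousMap.norm_coe_le_norm _ x)
  exact this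

/-- Cauchy–Schwarz for continuous nonnegative functions on a compact space. -/
private lemma cs_aux (μ : Measure B) [IsFiniteMeasure μ] {f g : B → ℝ}
    (hf : Continuous f) (hg : Continuous g) (hf0 : ∀ x, 0 ≤ f x) (hg0 : ∀ x, 0 ≤ g x) :
    ∫ x, f x * g x ∂μ ≤ (∫ x, f x ^ (2:ℝ) ∂μ) ^ ((1:ℝ)/2) * (∫ x, g x ^ (2:ℝ) ∂μ) ^ ((1:ℝ)/2) := by
  have hpq : Real.HolderConjugate 2 2 := Real.HolderConjugate.two_two
  exact integral_mul_le_Lp_mul_Lq_of_nonneg hpq (Filter.Eventually.of_forall hf0)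
    (Filter.Eventually.of_forall hg0) (memL2_aux μ hf) (memL2_aux μ hg)

end Aux

/-- For the partial products of a generalized Riesz product (with
`∫ ∏_{j∈F} |P j|² dh = 1` for all finite `F`), the following are equivalent:
(1) `∫ ∏_{k=0}^N |P k| dh → 0` as `N → ∞`;
(2) the infimum over all finite subsequences `n₁ < … < n_L` of
`∫ ∏_ℓ |P_{n_ℓ}| dh` is `0`. -/
theorem full_products_tendsto_zero_iff_inf_zero
    {B : Type*} [TopologicalSpace B] [CompactSpace B] [T2Space B]
    [MeasurableSpace B] [BorelSpace B]
    (h : Measure B) [IsProbabilityMeasure h]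
    (P : ℕ → C(B, ℂ))
    (hnorm : ∀ F : Finset ℕ, ∫ κ, ∏ j ∈ F, ‖P j κ‖ ^ 2 ∂h = 1) :
    Tendsto (fun N : ℕ => ∫ κ, ∏ k ∈ Finset.range (N + 1), ‖P k κ‖ ∂h) atTop (nhds 0) ↔
    ∀ ε : ℝ, 0 < ε → ∃ F : Finset ℕ, F.Nonempty ∧ ∫ κ, ∏ j ∈ F, ‖P j κ‖ ∂h < ε := by
  -- notation and basic facts
  have hcont : ∀ F : Finset ℕ, Continuous fun κ => ∏ j ∈ F, ‖P j κ‖ := fun F =>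
    continuous_finset_prod F fun j _ => (P j).continuous.norm
  have hnn : ∀ (F : Finset ℕ) (κ : B), 0 ≤ ∏ j ∈ F, ‖P j κ‖ := fun F κ =>
    Finset.prod_nonneg fun j _ => norm_nonneg _
  have hintnn : ∀ F : Finset ℕ, 0 ≤ ∫ κ, ∏ j ∈ F, ‖P j κ‖ ∂h := fun F =>
    integral_nonneg fun κ => hnn F κ
  constructor
  · -- (1) → (2)
    intro hT ε hε
    rcases (Metric.tendsto_atTop.1 hT) ε hε with ⟨N, hN⟩
    refine ⟨Finset.range (N + 1), Finset.nonempty_range_iff.2 (Nat.succ_ne_zero N), ?_⟩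
    have := hN N le_rfl
    rwa [Real.dist_eq, sub_zero, abs_of_nonneg (hintnn _)] at this
  · -- (2) → (1): the key inequality
    intro hinf
    -- Key: for F ⊆ range (N+1),
    -- ∫ ∏_{range(N+1)} ≤ (∫ ∏_F)^(1/2)
    have key : ∀ (N : ℕ) (F : Finset ℕ), F ⊆ Finset.range (N + 1) →
        ∫ κ, ∏ k ∈ Finset.range (N + 1), ‖P k κ‖ ∂h ≤
          (∫ κ, ∏ j ∈ F, ‖P j κ‖ ∂h) ^ ((1:ℝ)/2) := by
      intro N F hF
      set G := Finset.range (N + 1) \ F with hG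
      have hunion : ∀ κ : B, ∏ k ∈ Finset.range (N + 1), ‖P k κ‖ =
          (∏ j ∈ F, ‖P j κ‖) * ∏ j ∈ G, ‖P j κ‖ := by
        intro κ
        rw [mul_comm, Finset.prod_sdiff hF]
      -- Step 2: ∫ (∏_F) * (∏_G)^2 ≤ 1
      have step2 : ∫ κ, (∏ j ∈ F, ‖P j κ‖) * (∏ j ∈ G, ‖P j κ‖) ^ (2:ℝ) ∂h ≤ 1 := by
        have e : ∀ κ : B, (∏ j ∈ F, ‖P j κ‖) * (∏ j ∈ G, ‖P j κ‖) ^ (2:ℝ) =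
            (∏ j ∈ G, ‖P j κ‖) * ((∏ j ∈ F, ‖P j κ‖) * ∏ j ∈ G, ‖P j κ‖) := by
          intro κ
          rw [Real.rpow_two]
          ring
        calc ∫ κ, (∏ j ∈ F, ‖P j κ‖) * (∏ j ∈ G, ‖P j κ‖) ^ (2:ℝ) ∂h
            = ∫ κ, (∏ j ∈ G, ‖P j κ‖) * ((∏ j ∈ F, ‖P j κ‖) * ∏ j ∈ G, ‖P j κ‖) ∂h := by
              simp only [e]
          _ ≤ (∫ κ, (∏ j ∈ G, ‖P j κ‖) ^ (2:ℝ) ∂h) ^ ((1:ℝ)/2) *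
              (∫ κ, ((∏ j ∈ F, ‖P j κ‖) * ∏ j ∈ G, ‖P j κ‖) ^ (2:ℝ) ∂h) ^ ((1:ℝ)/2) :=
              cs_aux h (hcont G) ((hcont F).mul (hcont G))
                (fun κ => hnn G κ) (fun κ => mul_nonneg (hnn F κ) (hnn G κ))
          _ = 1 := by
              have e1 : ∫ κ, (∏ j ∈ G, ‖P j κ‖) ^ (2:ℝ) ∂h = 1 := by
                rw [← hnorm G]
                refine integral_congr_ae (Filter.Eventually.of_forall fun κ => ?_)
                simp only [Real.rpow_two, Finset.prod_pow]
              have e2 : ∫ κ, ((∏ j ∈ F, ‖P j κ‖) * ∏ j ∈ G, ‖P j κ‖) ^ (2:ℝ) ∂h = 1 := by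
                rw [← hnorm (Finset.range (N + 1))]
                refine integral_congr_ae (Filter.Eventually.of_forall fun κ => ?_)
                simp only [Real.rpow_two, ← hunion κ, Finset.prod_pow]
              rw [e1, e2, Real.one_rpow, one_mul]
      -- Step 1: Cauchy–Schwarz with √(∏_F) split
      have step1 : ∫ κ, ∏ k ∈ Finset.range (N + 1), ‖P k κ‖ ∂h ≤
          (∫ κ, ∏ j ∈ F, ‖P j κ‖ ∂h) ^ ((1:ℝ)/2) *
          (∫ κ, (∏ j ∈ F, ‖P j κ‖) * (∏ j ∈ G, ‖P j κ‖) ^ (2:ℝ) ∂h) ^ ((1:ℝ)/2) := by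
        have e : ∀ κ : B, ∏ k ∈ Finset.range (N + 1), ‖P k κ‖ =
            Real.sqrt (∏ j ∈ F, ‖P j κ‖) *
              (Real.sqrt (∏ j ∈ F, ‖P j κ‖) * ∏ j ∈ G, ‖P j κ‖) := by
          intro κ
          rw [hunion κ, ← mul_assoc, Real.mul_self_sqrt (hnn F κ)]
        have e1 : ∀ κ : B, Real.sqrt (∏ j ∈ F, ‖P j κ‖) ^ (2:ℝ) = ∏ j ∈ F, ‖P j κ‖ := by
          intro κ
          rw [Real.rpow_two, Real.sq_sqrt (hnn F κ)]
        have e2 : ∀ κ : B, (Real.sqrt (∏ j ∈ F, ‖P j κ‖) * ∏ j ∈ G, ‖P j κ‖) ^ (2:ℝ) =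
            (∏ j ∈ F, ‖P j κ‖) * (∏ j ∈ G, ‖P j κ‖) ^ (2:ℝ) := by
          intro κ
          rw [Real.rpow_two, Real.rpow_two, mul_pow, Real.sq_sqrt (hnn F κ)]
        calc ∫ κ, ∏ k ∈ Finset.range (N + 1), ‖P k κ‖ ∂h
            = ∫ κ, Real.sqrt (∏ j ∈ F, ‖P j κ‖) *
                (Real.sqrt (∏ j ∈ F, ‖P j κ‖) * ∏ j ∈ G, ‖P j κ‖) ∂h := by
              simp only [e]
          _ ≤ (∫ κ, Real.sqrt (∏ j ∈ F, ‖P j κ‖) ^ (2:ℝ) ∂h) ^ ((1:ℝ)/2) *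
              (∫ κ, (Real.sqrt (∏ j ∈ F, ‖P j κ‖) * ∏ j ∈ G, ‖P j κ‖) ^ (2:ℝ) ∂h) ^ ((1:ℝ)/2) :=
              cs_aux h (Real.continuous_sqrt.comp (hcont F))
                ((Real.continuous_sqrt.comp (hcont F)).mul (hcont G))
                (fun κ => Real.sqrt_nonneg _)
                (fun κ => mul_nonneg (Real.sqrt_nonneg _) (hnn G κ))
          _ = (∫ κ, ∏ j ∈ F, ‖P j κ‖ ∂h) ^ ((1:ℝ)/2) *
              (∫ κ, (∏ j ∈ F, ‖P j κ‖) * (∏ j ∈ G, ‖P j κ‖) ^ (2:ℝ) ∂h) ^ ((1:ℝ)/2) := by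
              congr 1
              · congr 1
                exact integral_congr_ae (Filter.Eventually.of_forall e1)
              · congr 1
                exact integral_congr_ae (Filter.Eventually.of_forall e2)
      calc ∫ κ, ∏ k ∈ Finset.range (N + 1), ‖P k κ‖ ∂h
          ≤ (∫ κ, ∏ j ∈ F, ‖P j κ‖ ∂h) ^ ((1:ℝ)/2) *
            (∫ κ, (∏ j ∈ F, ‖P j κ‖) * (∏ j ∈ G, ‖P j κ‖) ^ (2:ℝ) ∂h) ^ ((1:ℝ)/2) := step1
        _ ≤ (∫ κ, ∏ j ∈ F, ‖P j κ‖ ∂h) ^ ((1:ℝ)/2) * 1 := by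
            refine mul_le_mul_of_nonneg_left ?_ (Real.rpow_nonneg (hintnn F) _)
            calc (∫ κ, (∏ j ∈ F, ‖P j κ‖) * (∏ j ∈ G, ‖P j κ‖) ^ (2:ℝ) ∂h) ^ ((1:ℝ)/2)
                ≤ (1:ℝ) ^ ((1:ℝ)/2) := by
                  refine Real.rpow_le_rpow ?_ step2 (by norm_num)
                  exact integral_nonneg fun κ =>
                    mul_nonneg (hnn F κ) (Real.rpow_nonneg (hnn G κ) _)
              _ = 1 := Real.one_rpow _
        _ = (∫ κ, ∏ j ∈ F, ‖P j κ‖ ∂h) ^ ((1:ℝ)/2) := mul_one _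
    -- conclude the limit
    rw [Metric.tendsto_atTop]
    intro ε hε
    obtain ⟨F, hFne, hFlt⟩ := hinf (ε ^ 2) (pow_pos hε 2)
    refine ⟨F.max' hFne, fun n hn => ?_⟩
    have hFsub : F ⊆ Finset.range (n + 1) := by
      intro x hx
      exact Finset.mem_range.2 (Nat.lt_succ_of_le (le_trans (F.le_max' x hx) hn))
    rw [Real.dist_eq, sub_zero, abs_of_nonneg (hintnn _)]
    calc ∫ κ, ∏ k ∈ Finset.range (n + 1), ‖P k κ‖ ∂h
        ≤ (∫ κ, ∏ j ∈ F, ‖P j κ‖ ∂h) ^ ((1:ℝ)/2) := key n F hFsub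
      _ < (ε ^ 2) ^ ((1:ℝ)/2) := by
          exact Real.rpow_lt_rpow (hintnn F) hFlt (by norm_num)
      _ = ε := by
          rw [← Real.rpow_two, ← Real.rpow_mul hε.le]
          norm_num
end

section
/- Let f_N, g be functions on a compact probability space with f_N ≥ 0, ∫ f_N² dh = 1, and suppose the measures f_N² dh converge weakly to a measure μ. If for every ε > 0 there is a continuous function φ with 0 ≤ φ ≤ 1, μ({φ ≠ 0}) ≤ ε, and h({φ ≠ 1}) ≤ ε (i.e., μ ⊥ h), then ∫ f_N dh → 0. -/
open MeasureTheory Filter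

lemma cont_memLp {X : Type*} [TopologicalSpace X] [CompactSpace X]
    [MeasurableSpace X] [BorelSpace X] (h : Measure X) [IsFiniteMeasure h]
    {f : X → ℝ} (hf : Continuous f) (p : ENNReal) : MemLp f p h :=
  hf.memLp_of_hasCompactSupport ((isClosed_tsupport f).isCompact)

lemma cont_integrable {X : Type*} [TopologicalSpace X] [CompactSpace X]
    [MeasurableSpace X] [BorelSpace X] (h : Measure X) [IsFiniteMeasure h]
    {f : X → ℝ} (hf : Continuous f) : Integrable f h :=
  memLp_one_iff_integrable.mp (cont_memLp h hf 1)

lemma cs_aux_s11 {X : Type*} [TopologicalSpace X] [CompactSpace X]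
    [MeasurableSpace X] [BorelSpace X] (h : Measure X) [IsFiniteMeasure h]
    {w g : X → ℝ} (hw : Continuous w) (hg : Continuous g)
    (hw0 : ∀ x, 0 ≤ w x) (hg0 : ∀ x, 0 ≤ g x) :
    ∫ x, w x * g x ∂h ≤
      Real.sqrt (∫ x, w x ∂h) * Real.sqrt (∫ x, w x * g x ^ 2 ∂h) := by
  have hpq : Real.HolderConjugate 2 2 := Real.HolderConjugate.two_two
  have hu : Continuous fun x => Real.sqrt (w x) := Real.continuous_sqrt.comp hw
  have hv : Continuous fun x => Real.sqrt (w x) * g x := hu.mul hg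
  have key := integral_mul_le_Lp_mul_Lq_of_nonneg (μ := h) hpq
    (f := fun x => Real.sqrt (w x)) (g := fun x => Real.sqrt (w x) * g x)
    (Filter.Eventually.of_forall fun x => Real.sqrt_nonneg _)
    (Filter.Eventually.of_forall fun x => mul_nonneg (Real.sqrt_nonneg _) (hg0 x))
    (by simpa using cont_memLp h hu (ENNReal.ofReal 2))
    (by simpa using cont_memLp h hv (ENNReal.ofReal 2))
  have e1 : ∫ a, Real.sqrt (w a) * (Real.sqrt (w a) * g a) ∂h = ∫ x, w x * g x ∂h := by
    refine integral_congr_ae (Filter.Eventually.of_forall fun x => ?_)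
    show Real.sqrt (w x) * (Real.sqrt (w x) * g x) = w x * g x
    rw [← mul_assoc, Real.mul_self_sqrt (hw0 x)]
  have e2 : ∫ a, Real.sqrt (w a) ^ (2:ℝ) ∂h = ∫ x, w x ∂h := by
    refine integral_congr_ae (Filter.Eventually.of_forall fun x => ?_)
    show Real.sqrt (w x) ^ (2:ℝ) = w x
    rw [show ((2:ℝ)) = ((2:ℕ):ℝ) by norm_num, Real.rpow_natCast, Real.sq_sqrt (hw0 x)]
  have e3 : ∫ a, (Real.sqrt (w a) * g a) ^ (2:ℝ) ∂h = ∫ x, w x * g x ^ 2 ∂h := by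
    refine integral_congr_ae (Filter.Eventually.of_forall fun x => ?_)
    show (Real.sqrt (w x) * g x) ^ (2:ℝ) = w x * g x ^ 2
    rw [show ((2:ℝ)) = ((2:ℕ):ℝ) by norm_num, Real.rpow_natCast]
    rw [mul_pow, Real.sq_sqrt (hw0 x)]
  rw [e1, e2, e3] at key
  calc ∫ x, w x * g x ∂h ≤ (∫ x, w x ∂h) ^ (1/2:ℝ) * (∫ x, w x * g x ^ 2 ∂h) ^ (1/2:ℝ) := key
    _ = _ := by rw [← Real.sqrt_eq_rpow, ← Real.sqrt_eq_rpow]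

/-- One direction of the Bourgain singularity criterion: if `f_N ≥ 0`, `∫ f_N² dh = 1`,
the measures `f_N² dh` converge weakly to `μ`, and `μ` is singular to `h` in the sense
that for every `ε > 0` there is a continuous `φ` with `0 ≤ φ ≤ 1`, `μ({φ ≠ 0}) ≤ ε` and
`h({φ ≠ 1}) ≤ ε`, then `∫ f_N dh → 0`. -/
theorem integral_tendsto_zero_of_singular
    {X : Type*} [TopologicalSpace X] [CompactSpace X] [T2Space X]
    [MeasurableSpace X] [BorelSpace X]
    (h : Measure X) [IsProbabilityMeasure h]
    (f : ℕ → X → ℝ) (hfc : ∀ N, Continuous (f N)) (hf0 : ∀ N x, 0 ≤ f N x)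
    (hf2 : ∀ N, ∫ x, f N x ^ 2 ∂h = 1)
    (μ : Measure X) [IsFiniteMeasure μ]
    (hweak : ∀ g : C(X, ℝ),
      Tendsto (fun N : ℕ => ∫ x, g x * f N x ^ 2 ∂h) atTop (nhds (∫ x, g x ∂μ)))
    (hsing : ∀ ε : ℝ, 0 < ε → ∃ φ : C(X, ℝ),
      (∀ x, 0 ≤ φ x ∧ φ x ≤ 1) ∧
      μ {x | φ x ≠ 0} ≤ ENNReal.ofReal ε ∧
      h {x | φ x ≠ 1} ≤ ENNReal.ofReal ε) :
    Tendsto (fun N : ℕ => ∫ x, f N x ∂h) atTop (nhds 0) := by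
  rw [Metric.tendsto_atTop]
  intro ε hε
  have hδ : (0:ℝ) < (ε/4)^2 := by positivity
  obtain ⟨φ, hφ01, hμφ, hhφ⟩ := hsing ((ε/4)^2) hδ
  set δ : ℝ := (ε/4)^2 with hδdef
  have hS1 : MeasurableSet {x | φ x ≠ 0} := by
    have e : {x | φ x ≠ 0} = φ ⁻¹' ({0}ᶜ) := rfl
    rw [e]; exact (measurableSet_singleton (0:ℝ)).compl.preimage φ.continuous.measurable
  have hμφle : ∫ x, φ x ∂μ ≤ δ := by
    have hle : ∀ x, φ x ≤ Set.indicator {x | φ x ≠ 0} (fun _ => (1:ℝ)) x := by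
      intro x
      by_cases hx : φ x = 0
      · simp only [Set.indicator]
        split
        · exact (le_of_eq hx).trans zero_le_one
        · exact le_of_eq hx
      · rw [Set.indicator_of_mem (show x ∈ {x | φ x ≠ 0} from hx)]; exact (hφ01 x).2
    calc ∫ x, φ x ∂μ ≤ ∫ x, Set.indicator {x | φ x ≠ 0} (fun _ => (1:ℝ)) x ∂μ :=
          integral_mono (cont_integrable μ φ.continuous)
            ((integrable_const (1:ℝ)).indicator hS1) hle
      _ = (μ {x | φ x ≠ 0}).toReal := by
          rw [integral_indicator_const _ hS1]; simp [Measure.real]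
      _ ≤ δ := ENNReal.toReal_le_of_le_ofReal hδ.le hμφ
  have hhφle : ∫ x, 1 - φ x ∂h ≤ δ := by
    have hS2 : MeasurableSet {x | φ x ≠ 1} := by
      have e : {x | φ x ≠ 1} = φ ⁻¹' ({1}ᶜ) := rfl
      rw [e]; exact (measurableSet_singleton (1:ℝ)).compl.preimage φ.continuous.measurable
    have hle : ∀ x, 1 - φ x ≤ Set.indicator {x | φ x ≠ 1} (fun _ => (1:ℝ)) x := by
      intro x
      by_cases hx : φ x = 1
      · simp only [Set.indicator]
        split
        · linarith [(hφ01 x).1]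
        · linarith
      · rw [Set.indicator_of_mem (show x ∈ {x | φ x ≠ 1} from hx)]; linarith [(hφ01 x).1]
    calc ∫ x, 1 - φ x ∂h ≤ ∫ x, Set.indicator {x | φ x ≠ 1} (fun _ => (1:ℝ)) x ∂h :=
          integral_mono (cont_integrable h (continuous_const.sub φ.continuous))
            ((integrable_const (1:ℝ)).indicator hS2) hle
      _ = (h {x | φ x ≠ 1}).toReal := by
          rw [integral_indicator_const _ hS2]; simp [Measure.real]
      _ ≤ δ := ENNReal.toReal_le_of_le_ofReal hδ.le hhφ
  have hev : ∀ᶠ N in atTop, ∫ x, φ x * f N x ^ 2 ∂h < 2*δ :=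
    (hweak φ).eventually_lt_const (by linarith)
  obtain ⟨N₀, hN₀⟩ := eventually_atTop.mp hev
  refine ⟨N₀, fun n hn => ?_⟩
  have h1 : ∫ x, φ x * f n x ∂h ≤
      Real.sqrt (∫ x, φ x ∂h) * Real.sqrt (∫ x, φ x * f n x ^ 2 ∂h) :=
    cs_aux_s11 h φ.continuous (hfc n) (fun x => (hφ01 x).1) (hf0 n)
  have h2 : ∫ x, (1 - φ x) * f n x ∂h ≤
      Real.sqrt (∫ x, 1 - φ x ∂h) * Real.sqrt (∫ x, (1 - φ x) * f n x ^ 2 ∂h) :=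
    cs_aux_s11 h (continuous_const.sub φ.continuous) (hfc n)
      (fun x => by linarith [(hφ01 x).2]) (hf0 n)
  have b1 : Real.sqrt (∫ x, φ x ∂h) ≤ 1 := by
    have hle1 : ∫ x, φ x ∂h ≤ 1 := by
      calc ∫ x, φ x ∂h ≤ ∫ _x, (1:ℝ) ∂h :=
          integral_mono (cont_integrable h φ.continuous) (integrable_const 1)
            (fun x => (hφ01 x).2)
        _ = 1 := by simp
    calc Real.sqrt (∫ x, φ x ∂h) ≤ Real.sqrt 1 := Real.sqrt_le_sqrt hle1
      _ = 1 := Real.sqrt_one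
  have b2 : Real.sqrt (∫ x, φ x * f n x ^ 2 ∂h) ≤ Real.sqrt (2*δ) :=
    Real.sqrt_le_sqrt (le_of_lt (hN₀ n hn))
  have b3 : Real.sqrt (∫ x, 1 - φ x ∂h) ≤ ε/4 := by
    rw [show ε/4 = Real.sqrt δ by rw [hδdef, Real.sqrt_sq (by positivity)]]
    exact Real.sqrt_le_sqrt hhφle
  have b4 : Real.sqrt (∫ x, (1 - φ x) * f n x ^ 2 ∂h) ≤ 1 := by
    have hle1 : ∫ x, (1 - φ x) * f n x ^ 2 ∂h ≤ 1 := by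
      calc ∫ x, (1 - φ x) * f n x ^ 2 ∂h ≤ ∫ x, f n x ^ 2 ∂h :=
          integral_mono
            (cont_integrable h ((continuous_const.sub φ.continuous).mul ((hfc n).pow 2)))
            (cont_integrable h ((hfc n).pow 2))
            (fun x => by nlinarith [(hφ01 x).1, sq_nonneg (f n x)])
        _ = 1 := hf2 n
    calc Real.sqrt (∫ x, (1 - φ x) * f n x ^ 2 ∂h) ≤ Real.sqrt 1 := Real.sqrt_le_sqrt hle1
      _ = 1 := Real.sqrt_one
  have hsplit : ∫ x, f n x ∂h = ∫ x, φ x * f n x ∂h + ∫ x, (1 - φ x) * f n x ∂h := by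
    rw [← integral_add (f := fun x => φ x * f n x) (g := fun x => (1 - φ x) * f n x) (cont_integrable h (φ.continuous.mul (hfc n)))
      (cont_integrable h ((continuous_const.sub φ.continuous).mul (hfc n)))]
    refine integral_congr_ae (Filter.Eventually.of_forall fun x => ?_)
    ring
  have hA : ∫ x, φ x * f n x ∂h ≤ Real.sqrt (2*δ) := by
    refine h1.trans ?_
    calc Real.sqrt (∫ x, φ x ∂h) * Real.sqrt (∫ x, φ x * f n x ^ 2 ∂h)
        ≤ 1 * Real.sqrt (2*δ) := mul_le_mul b1 b2 (Real.sqrt_nonneg _) zero_le_one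
      _ = Real.sqrt (2*δ) := one_mul _
  have hB : ∫ x, (1 - φ x) * f n x ∂h ≤ ε/4 := by
    refine h2.trans ?_
    calc Real.sqrt (∫ x, 1 - φ x ∂h) * Real.sqrt (∫ x, (1 - φ x) * f n x ^ 2 ∂h)
        ≤ (ε/4) * 1 := mul_le_mul b3 b4 (Real.sqrt_nonneg _) (by positivity)
      _ = ε/4 := mul_one _
  have hsq : Real.sqrt (2*δ) ≤ ε/2 := by
    rw [show ε/2 = Real.sqrt ((ε/2)^2) from (Real.sqrt_sq (by positivity)).symm]
    apply Real.sqrt_le_sqrt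
    rw [hδdef]; nlinarith
  have hnn : 0 ≤ ∫ x, f n x ∂h := integral_nonneg (hf0 n)
  rw [Real.dist_eq, sub_zero, abs_of_nonneg hnn]
  rw [hsplit]
  linarith
end

section
/- Bourgain criterion on bℝ: the generalized Riesz product μ = ∏_{k=0}^∞ |P_k|² dh is singular with respect to the Haar measure h on bℝ if and only if inf { ∫_{bℝ} ∏_{ℓ=1}^L |P_{n_ℓ}| dh : L ∈ ℕ, n₁ < n₂ < … < n_L } = 0. -/
open MeasureTheory Filter

set_option linter.unusedSectionVars false
set_option maxHeartbeats 1000000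

section AuxiliarySection
open Set Topology Pointwise
open scoped ENNReal NNReal

namespace BourgainAux

section Aux

variable {B : Type*} [TopologicalSpace B] [CompactSpace B] [T2Space B] [AddCommGroup B]
    [IsTopologicalAddGroup B] [MeasurableSpace B] [BorelSpace B]

lemma eq_zero_of_forall_le_ofReal_pow {a : ℝ≥0∞} (ha : a ≠ ⊤) (c : ℝ)
    (hb : ∀ k : ℕ, a ≤ ENNReal.ofReal (c * (1/2:ℝ)^k)) : a = 0 := by
  by_contra hne
  rcases le_or_gt c 0 with hc | hc
  · have := hb 0
    simp only [pow_zero, mul_one] at this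
    have h0 : ENNReal.ofReal c = 0 := by
      rw [ENNReal.ofReal_eq_zero]; exact hc
    rw [h0, le_zero_iff] at this
    exact hne this
  · have hpos : 0 < a.toReal := ENNReal.toReal_pos hne ha
    obtain ⟨k, hk⟩ := exists_pow_lt_of_lt_one (show (0:ℝ) < a.toReal / c by positivity)
      (show (1/2:ℝ) < 1 by norm_num)
    have h1 := hb k
    rw [ENNReal.le_ofReal_iff_toReal_le ha (by positivity)] at h1
    have h2 : c * (1/2:ℝ)^k < a.toReal := by
      rw [lt_div_iff₀ hc] at hk
      linarith [hk]
    linarith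

variable {B : Type*} [TopologicalSpace B] [CompactSpace B] [T2Space B] [AddCommGroup B]
    [IsTopologicalAddGroup B] [MeasurableSpace B] [BorelSpace B]

lemma integrable_of_continuous (μ : Measure B) [IsFiniteMeasure μ] {g : B → ℝ}
    (hg : Continuous g) : Integrable g μ := by
  obtain ⟨C, hC⟩ := (isCompact_range (hg.norm)).bddAbove
  refine Integrable.mono' (integrable_const C) hg.aestronglyMeasurable ?_
  exact ae_of_all _ fun x => hC ⟨x, rfl⟩

lemma exists_sym_open_add_subset {U : Set B} (hU : U ∈ nhds (0:B)) :
    ∃ V : Set B, IsOpen V ∧ (0:B) ∈ V ∧ (∀ x ∈ V, -x ∈ V) ∧ V + V ⊆ U := by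
  obtain ⟨V, hVo, hV0, hVU⟩ := exists_open_nhds_zero_add_subset hU
  refine ⟨V ∩ (fun x : B => -x) ⁻¹' V, hVo.inter (hVo.preimage continuous_neg), ⟨hV0, by simpa⟩,
    ?_, ?_⟩
  · rintro x ⟨hx1, hx2⟩
    exact ⟨hx2, by simpa⟩
  · intro z hz
    obtain ⟨a, ha, b, hb, rfl⟩ := hz
    exact hVU (add_mem_add ha.1 hb.1)

lemma unif_cont {g : B → ℝ} (hg : Continuous g) {ε : ℝ} (hε : 0 < ε) :
    ∃ V : Set B, IsOpen V ∧ (0:B) ∈ V ∧ ∀ x : B, ∀ v ∈ V, |g (x + v) - g x| ≤ ε := by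
  have h1 : ∀ x : B, ∃ V : Set B, IsOpen V ∧ (0:B) ∈ V ∧ (∀ y ∈ V, -y ∈ V) ∧
      ∀ w ∈ V + V, |g (x + w) - g x| < ε / 2 := by
    intro x
    have hcont : Continuous fun w : B => |g (x + w) - g x| :=
      ((hg.comp (continuous_const.add continuous_id)).sub continuous_const).abs
    have hmem : {w : B | |g (x + w) - g x| < ε / 2} ∈ nhds (0:B) := by
      have h0 : |g (x + (0:B)) - g x| < ε/2 := by simp [half_pos hε]
      exact (hcont.continuousAt).preimage_mem_nhds (Iio_mem_nhds (by simpa using h0))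
    obtain ⟨V, hVo, hV0, hVsym, hVU⟩ := exists_sym_open_add_subset hmem
    exact ⟨V, hVo, hV0, hVsym, fun w hw => hVU hw⟩
  choose Vx hVxo hVx0 hVxsym hVx using h1
  have hcover : (univ : Set B) ⊆ ⋃ x : B, (fun y => x + y) '' Vx x := by
    intro y _
    exact mem_iUnion.2 ⟨y, ⟨0, hVx0 y, by simp⟩⟩
  obtain ⟨t, ht⟩ := isCompact_univ.elim_finite_subcover (fun x : B => (fun y => x + y) '' Vx x)
    (fun x => (isOpenMap_add_left x) _ (hVxo x)) hcover
  refine ⟨⋂ x ∈ t, Vx x, isOpen_biInter_finset (fun x _ => hVxo x), ?_, ?_⟩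
  · exact mem_biInter fun x _ => hVx0 x
  · intro x v hv
    have hx : x ∈ ⋃ x₀ ∈ t, (fun y => x₀ + y) '' Vx x₀ := by
      have := ht (mem_univ x); simpa using this
    rw [mem_iUnion₂] at hx
    obtain ⟨x₀, hx₀t, hmem⟩ := hx
    obtain ⟨w, hw, hxw⟩ := hmem
    have hv' : v ∈ Vx x₀ := by
      exact mem_iInter₂.1 hv x₀ hx₀t
    have h1 : |g (x₀ + w) - g x₀| < ε/2 := hVx x₀ w (by
      have hweq : w = w + 0 := by simp
      rw [hweq]; exact add_mem_add hw (hVx0 x₀))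
    have h2 : |g (x₀ + (w + v)) - g x₀| < ε/2 := hVx x₀ (w + v) (add_mem_add hw hv')
    have hxeq : x = x₀ + w := by simpa using hxw.symm
    have hgeq : g (x + v) = g (x₀ + (w + v)) := by rw [hxeq, add_assoc]
    rw [hgeq, hxeq]
    calc |g (x₀ + (w + v)) - g (x₀ + w)|
        ≤ |g (x₀ + (w + v)) - g x₀| + |g x₀ - g (x₀ + w)| := abs_sub_le _ _ _
      _ ≤ ε/2 + ε/2 := by
          rw [abs_sub_comm (g x₀)]
          exact add_le_add h2.le h1.le
      _ = ε := by ring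

lemma closure_subset_add {S V : Set B} (hVo : IsOpen V) (hV0 : (0:B) ∈ V)
    (hVsym : ∀ x ∈ V, -x ∈ V) : closure S ⊆ S + V := by
  intro x hx
  have hnb : (fun v => x + v) '' V ∈ nhds x := by
    have : IsOpen ((fun v => x + v) '' V) := (isOpenMap_add_left x) _ hVo
    exact this.mem_nhds ⟨0, hV0, by simp⟩
  obtain ⟨y, hyim, hyS⟩ := mem_closure_iff_nhds.1 hx _ hnb
  obtain ⟨v, hv, hvy⟩ := hyim
  refine ⟨y, hyS, -v, hVsym v hv, ?_⟩
  have : y = x + v := hvy.symm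
  rw [this]
  exact add_neg_cancel_right x v

lemma exists_chain (W : ℕ → Set B) (hWo : ∀ k, IsOpen (W k)) (hW0 : ∀ k, (0:B) ∈ W k) :
    ∃ V : ℕ → Set B, (∀ k, IsOpen (V k)) ∧ (∀ k, (0:B) ∈ V k) ∧
      (∀ k, ∀ x ∈ V k, -x ∈ V k) ∧ (∀ k, V (k+1) + V (k+1) ⊆ V k) ∧ (∀ k, V (k+1) ⊆ W k) := by
  have step : ∀ U : Set B, IsOpen U → (0:B) ∈ U →
      ∃ V : Set B, (IsOpen V ∧ (0:B) ∈ V ∧ ∀ x ∈ V, -x ∈ V) ∧ V + V ⊆ U := by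
    intro U hUo hU0
    obtain ⟨V, h1, h2, h3, h4⟩ := exists_sym_open_add_subset (hUo.mem_nhds hU0)
    exact ⟨V, ⟨h1, h2, h3⟩, h4⟩
  choose! nextV hP hsub using step
  set V : ℕ → Set B := fun k => Nat.rec univ (fun k Vk => nextV (Vk ∩ W k)) k with hV
  have hprop : ∀ k, IsOpen (V k) ∧ (0:B) ∈ V k ∧ ∀ x ∈ V k, -x ∈ V k := by
    intro k
    induction k with
    | zero => exact ⟨isOpen_univ, mem_univ _, fun x _ => mem_univ _⟩
    | succ k ih =>
      have h1 : IsOpen (V k ∩ W k) := ih.1.inter (hWo k)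
      have h2 : (0:B) ∈ V k ∩ W k := ⟨ih.2.1, hW0 k⟩
      exact hP _ h1 h2
  have hchain : ∀ k, V (k+1) + V (k+1) ⊆ V k ∩ W k := by
    intro k
    exact hsub _ ((hprop k).1.inter (hWo k)) ⟨(hprop k).2.1, hW0 k⟩
  refine ⟨V, fun k => (hprop k).1, fun k => (hprop k).2.1, fun k => (hprop k).2.2, ?_, ?_⟩
  · exact fun k => (hchain k).trans inter_subset_left
  · intro k x hx
    have : x = x + 0 := by simp
    rw [this] at hx ⊢
    exact ((hchain k) (add_mem_add (by simpa using hx) (hprop (k+1)).2.1)).2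

theorem core_ae (h : Measure B) [IsProbabilityMeasure h] [Measure.IsAddHaarMeasure h]
    (N : AddSubgroup B) (hNc : IsClosed (N : Set B))
    {A K : Set B} (hA : MeasurableSet A) (hAinv : ∀ x ∈ A, ∀ n : ↥N, x + ↑n ∈ A)
    (hKcl : IsClosed K) (hAK : h (A \ K) = 0) :
    h (A \ {x | ∀ n : ↥N, x + ↑n ∈ K}) = 0 := by
  haveI : CompactSpace ↥N := isCompact_iff_compactSpace.mp hNc.isCompact
  haveI : BorelSpace ↥N := Subtype.borelSpace _
  set ha : Measure ↥N := Measure.addHaar with hha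
  have hc0 : ha univ ≠ 0 := (isOpen_univ.measure_ne_zero ha univ_nonempty)
  have hcT : ha univ ≠ ⊤ := measure_ne_top _ _
  set hN : Measure ↥N := (ha univ)⁻¹ • ha with hhN
  have hNval : ∀ S : Set ↥N, hN S = (ha univ)⁻¹ * ha S := fun S => rfl
  have hNuniv : hN univ = 1 := by
    rw [hNval, ENNReal.inv_mul_cancel hc0 hcT]
  haveI : IsProbabilityMeasure hN := ⟨hNuniv⟩
  haveI hareg : ha.Regular := by infer_instance
  haveI hNreg : hN.Regular := MeasureTheory.Measure.Regular.smul (ENNReal.inv_ne_top.mpr hc0)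
  have hNpos : ∀ {U : Set ↥N}, IsOpen U → U.Nonempty → hN U ≠ 0 := by
    intro U hU hUne
    rw [hNval]
    exact mul_ne_zero (ENNReal.inv_ne_zero.mpr hcT) (hU.measure_ne_zero ha hUne)
  -- fiber sets and fiber measure
  set S : Set B → B → Set ↥N := fun E x => {n : ↥N | x + ↑n ∈ E} with hS
  have hScont : ∀ x : B, Continuous fun n : ↥N => x + ↑n :=
    fun x => continuous_const.add continuous_subtype_val
  have hSmeas : ∀ {E : Set B}, MeasurableSet E → ∀ x, MeasurableSet (S E x) :=
    fun hE x => (hScont x).measurable hE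
  set m : Set B → B → ℝ≥0∞ := fun E x => hN (S E x) with hm
  -- lower semicontinuity on opens
  have hm_lsc : ∀ {O : Set B}, IsOpen O → LowerSemicontinuous (m O) := by
    intro O hO
    intro x₀ r hr
    have hSopen : IsOpen (S O x₀) := hO.preimage (hScont x₀)
    obtain ⟨L, hLsub, hLcomp, hrL⟩ := hNreg.innerRegular hSopen r hr
    -- tube lemma
    have hF : Continuous fun p : B × ↥N => p.1 + ↑p.2 :=
      continuous_fst.add (continuous_subtype_val.comp continuous_snd)
    have hopen : IsOpen ((fun p : B × ↥N => p.1 + ↑p.2) ⁻¹' O) := hO.preimage hF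
    have hsub : ({x₀} : Set B) ×ˢ L ⊆ (fun p : B × ↥N => p.1 + ↑p.2) ⁻¹' O := by
      rintro ⟨x, n⟩ ⟨hx, hn⟩
      simp only [mem_singleton_iff] at hx
      subst hx
      exact hLsub hn
    obtain ⟨u, v, hu, hv, hxu, hLv, huv⟩ :=
      generalized_tube_lemma isCompact_singleton hLcomp hopen hsub
    refine Filter.eventually_of_mem (hu.mem_nhds (hxu rfl)) ?_
    intro x hxu'
    have : L ⊆ S O x := by
      intro n hn
      exact huv (Set.mk_mem_prod hxu' (hLv hn))
    exact lt_of_lt_of_le hrL (measure_mono this)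
  -- measurability for all measurable sets, by Dynkin's lemma
  have hm_meas : ∀ ⦃E : Set B⦄, MeasurableSet E → Measurable (m E) := by
    have h_eq : ‹MeasurableSpace B› = MeasurableSpace.generateFrom {s : Set B | IsOpen s} :=
      BorelSpace.measurable_eq
    refine MeasurableSpace.induction_on_inter h_eq isPiSystem_isOpen ?_ ?_ ?_ ?_
    · simpa [hm, hS] using measurable_const (a := (0 : ℝ≥0∞)) (m := ‹MeasurableSpace B›)
    · exact fun t ht => (hm_lsc ht).measurable
    · intro t htm htmeas
      have hmc : m tᶜ = fun x => 1 - m t x := by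
        funext x
        have hcompl : S tᶜ x = (S t x)ᶜ := rfl
        rw [hm]
        simp only
        rw [hcompl, measure_compl (hSmeas htm x) (measure_ne_top _ _), hNuniv]
      rw [hmc]
      exact Measurable.const_sub htmeas 1
    · intro f hdisj hfm hfmeas
      have hun : m (⋃ i, f i) = fun x => ∑' i, m (f i) x := by
        funext x
        have : S (⋃ i, f i) x = ⋃ i, S (f i) x := by
          ext n; simp [hS]
        rw [hm]
        simp only
        rw [this, measure_iUnion ?_ (fun i => hSmeas (hfm i) x)]
        intro i j hij
        have := hdisj hij
        exact (this.preimage fun n : ↥N => x + ↑n)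
      rw [hun]
      exact Measurable.ennreal_tsum hfmeas
  -- the averaged measure
  set lam : Measure B := Measure.ofMeasurable (fun E _ => ∫⁻ x, m E x ∂h)
    (by
      have : m ∅ = fun _ => 0 := by funext x; simp [hm, hS]
      simp [this])
    (by
      intro f hfm hfd
      show (∫⁻ x, m (⋃ i, f i) x ∂h) = ∑' i, ∫⁻ x, m (f i) x ∂h
      have hun : m (⋃ i, f i) = fun x => ∑' i, m (f i) x := by
        funext x
        have : S (⋃ i, f i) x = ⋃ i, S (f i) x := by ext n; simp [hS]
        rw [hm]; simp only
        rw [this, measure_iUnion ?_ (fun i => hSmeas (hfm i) x)]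
        intro i j hij
        exact ((hfd hij).preimage fun n : ↥N => x + ↑n)
      rw [hun]
      exact lintegral_tsum fun i => (hm_meas (hfm i)).aemeasurable) with hlam
  have hlam_apply : ∀ {E : Set B}, MeasurableSet E → lam E = ∫⁻ x, m E x ∂h := by
    intro E hE
    exact Measure.ofMeasurable_apply E hE
  haveI : IsProbabilityMeasure lam := by
    constructor
    rw [hlam_apply MeasurableSet.univ]
    have : m univ = fun _ => 1 := by
      funext x
      have : S univ x = univ := by ext n; simp [hS]
      rw [hm]; simp only [this, hNuniv]
    rw [this]
    simp
  haveI : lam.IsAddLeftInvariant := by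
    constructor
    intro g
    refine Measure.ext fun E hE => ?_
    rw [Measure.map_apply (measurable_const_add g) hE]
    have hpre : MeasurableSet ((fun x : B => g + x) ⁻¹' E) := hE.preimage (measurable_const_add g)
    rw [hlam_apply hpre, hlam_apply hE]
    have hmeq : ∀ x : B, m ((fun x : B => g + x) ⁻¹' E) x = m E (g + x) := by
      intro x
      have : S ((fun x : B => g + x) ⁻¹' E) x = S E (g + x) := by
        ext n
        simp only [hS, mem_setOf_eq, mem_preimage]
        rw [add_assoc]
      rw [hm]; simp only [this]
    simp_rw [hmeq]
    exact (measurePreserving_add_left h g).lintegral_comp (hm_meas hE)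
  -- uniqueness of invariant measures
  have hlam_eq : lam = h := by
    have huniq := Measure.isAddInvariant_eq_smul_of_compactSpace lam h
    have huniv := congrArg (fun μ : Measure B => μ univ) huniq
    simp only [measure_univ, Measure.smul_apply] at huniv
    have hscalar : ((lam.addHaarScalarFactor h : ℝ≥0) : ℝ≥0∞) = 1 := by
      have := huniv.symm
      rwa [ENNReal.smul_def, smul_eq_mul, mul_one] at this
    rw [huniq]
    refine Measure.ext fun E hE => ?_
    rw [Measure.smul_apply, ENNReal.smul_def, smul_eq_mul, hscalar, one_mul]
  -- conclusion
  have hR : MeasurableSet (A \ K) := hA.diff hKcl.measurableSet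
  have hlintR : ∫⁻ x, m (A \ K) x ∂h = 0 := by
    rw [← hlam_apply hR, hlam_eq, hAK]
  have hae : ∀ᵐ x ∂h, m (A \ K) x = 0 := (lintegral_eq_zero_iff (hm_meas hR)).mp hlintR
  have hnull : h {x | m (A \ K) x ≠ 0} = 0 := by
    have := hae
    rwa [ae_iff] at this
  refine measure_mono_null ?_ hnull
  intro x hx
  obtain ⟨hxA, hxcore⟩ := hx
  simp only [mem_setOf_eq, not_forall] at hxcore
  obtain ⟨n₀, hn₀⟩ := hxcore
  have hopen : IsOpen (S Kᶜ x) := hKcl.isOpen_compl.preimage (hScont x)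
  have hne : (S Kᶜ x).Nonempty := ⟨n₀, hn₀⟩
  have hsubR : S Kᶜ x ⊆ S (A \ K) x := by
    intro n hn
    exact ⟨hAinv x hxA n, hn⟩
  have : m (A \ K) x ≠ 0 := by
    intro h0
    exact hNpos hopen hne (le_antisymm (le_trans (measure_mono hsubR) (le_of_eq h0)) (by positivity))
  exact this

theorem exists_separating (h : Measure B) [IsProbabilityMeasure h] [Measure.IsAddHaarMeasure h]
    (μ : Measure B) [IsProbabilityMeasure μ] (hsing : μ.MutuallySingular h) {δ : ℝ}
    (hδ : 0 < δ) :
    ∃ u : C(B, ℝ), (∀ x, u x ∈ Icc (0:ℝ) 1) ∧ (∫ x, u x ∂μ) < δ ∧ (∫ x, (1 - u x) ∂h) < δ := by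
  obtain ⟨s, hsm, hμs, hhsc⟩ := hsing
  have hhs : h s = 1 := by
    have := measure_add_measure_compl (μ := h) hsm
    rw [hhsc, add_zero, measure_univ] at this
    exact this
  -- compact K inside s with h K close to 1
  set εE : ℝ≥0∞ := ENNReal.ofReal (δ/2) with hεE
  have hεE0 : εE ≠ 0 := by
    simp [hεE, ENNReal.ofReal_eq_zero, not_le, half_pos hδ]
  obtain ⟨K, hKs, hKcomp, hKlt⟩ := hsm.exists_isCompact_lt_add (measure_ne_top h s) hεE0
  have hKbig : 1 < h K + εE := by rw [← hhs]; exact hKlt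
  -- open sets O j
  have hOex : ∀ j : ℕ, ∃ U : Set B, K ⊆ U ∧ IsOpen U ∧ h U < h K + 1/(j+1 : ℝ≥0∞) := by
    intro j
    exact Set.exists_isOpen_lt_add K (measure_ne_top h K)
      (by simp [ENNReal.div_eq_zero_iff])
  choose O hKO hOopen hOlt using hOex
  -- Urysohn functions g j : 1 on K, 0 off O j
  have hgex : ∀ j : ℕ, ∃ g : C(B, ℝ), EqOn g 0 ((O j)ᶜ) ∧ EqOn g 1 K ∧
      ∀ x, g x ∈ Icc (0:ℝ) 1 := by
    intro j
    refine exists_continuous_zero_one_of_isCompact ((hOopen j).isClosed_compl.isCompact)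
      hKcomp.isClosed ?_
    rw [disjoint_compl_left_iff_subset]
    exact hKO j
  choose g hg0 hg1 hg01 using hgex
  -- uniform continuity neighborhoods, enumerated by pairs
  have hWex : ∀ k : ℕ, ∃ V : Set B, IsOpen V ∧ (0:B) ∈ V ∧
      ∀ x : B, ∀ v ∈ V, |(g k.unpair.1) (x + v) - (g k.unpair.1) x| ≤ 1/(k.unpair.2+1 : ℝ) := by
    intro k
    exact unif_cont (g k.unpair.1).continuous (by positivity)
  choose W hWo hW0 hWuc using hWex
  obtain ⟨V, hVo, hV0, hVsym, hVsum, hVW⟩ := exists_chain W hWo hW0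
  have hVnested : ∀ k, V (k+1) ⊆ V k := by
    intro k x hx
    have : x = x + 0 := by simp
    rw [this]
    exact hVsum k (add_mem_add hx (hV0 (k+1)))
  have hVmono : ∀ {j k}, j ≤ k → V k ⊆ V j := by
    intro j k hjk
    induction hjk with
    | refl => exact subset_rfl
    | step h ih => exact (hVnested _).trans ih
  -- the subgroup N
  set N : AddSubgroup B :=
    { carrier := ⋂ k, V k
      zero_mem' := mem_iInter.2 fun k => hV0 k
      add_mem' := by
        intro a b ha hb
        refine mem_iInter.2 fun k => ?_
        exact hVsum k (add_mem_add (mem_iInter.1 ha (k+1)) (mem_iInter.1 hb (k+1)))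
      neg_mem' := by
        intro a ha
        exact mem_iInter.2 fun k => hVsym k a (mem_iInter.1 ha k) } with hN
  have hNV : ∀ (n : ↥N) (k : ℕ), (n : B) ∈ V k := by
    intro n k
    exact mem_iInter.1 n.2 k
  have hNc : IsClosed (N : Set B) := by
    have : (N : Set B) = ⋂ k, closure (V (k+1)) := by
      apply Subset.antisymm
      · intro x hx
        exact mem_iInter.2 fun k => subset_closure (mem_iInter.1 hx (k+1))
      · intro x hx
        refine mem_iInter.2 fun k => ?_
        have h1 : closure (V (k+1)) ⊆ V (k+1) + V (k+1) :=
          closure_subset_add (hVo (k+1)) (hV0 (k+1)) (hVsym (k+1))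
        exact hVsum k (h1 (mem_iInter.1 hx k))
    rw [this]
    exact isClosed_iInter fun k => isClosed_closure
  -- invariance of g j under N
  have hginv : ∀ (j : ℕ) (x : B) (n : ↥N), g j (x + ↑n) = g j x := by
    intro j x n
    by_contra hne
    have habs : 0 < |g j (x + ↑n) - g j x| := abs_pos.2 (sub_ne_zero.2 hne)
    obtain ⟨i, hi⟩ := exists_nat_one_div_lt habs
    have hmem : (n : B) ∈ W (Nat.pair j i) := hVW _ (hNV n (Nat.pair j i + 1))
    have := hWuc (Nat.pair j i) x (n : B) hmem
    rw [Nat.unpair_pair] at this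
    exact absurd this (not_le.2 hi)
  -- the invariant set A
  set A : Set B := ⋂ j, {x | g j x = 1} with hA
  have hAmeas : MeasurableSet A :=
    MeasurableSet.iInter fun j =>
      (isClosed_eq (g j).continuous continuous_const).measurableSet
  have hKA : K ⊆ A := fun x hx => mem_iInter.2 fun j => hg1 j hx
  have hAinv : ∀ x ∈ A, ∀ n : ↥N, x + ↑n ∈ A := by
    intro x hx n
    exact mem_iInter.2 fun j => by
      have := mem_iInter.1 hx j
      simpa [hginv j x n] using this
  have hAO : ∀ j, A ⊆ O j := by
    intro j x hx
    by_contra hxO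
    have := hg0 j (hxO : x ∈ (O j)ᶜ)
    have h1 : g j x = 1 := mem_iInter.1 hx j
    rw [h1] at this
    norm_num at this
  have hAK : h (A \ K) = 0 := by
    by_contra hne
    obtain ⟨i, hi⟩ := ENNReal.exists_inv_nat_lt hne
    have hsub : A \ K ⊆ O (i+1) \ K := diff_subset_diff_left (hAO (i+1))
    have h1 : h (O (i+1) \ K) ≤ 1/(i+2 : ℝ≥0∞) := by
      have := measure_diff_le_iff_le_add hKcomp.isClosed.measurableSet.nullMeasurableSet
        (hKO (i+1)) (measure_ne_top h K) |>.2 (hOlt (i+1)).le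
      convert this using 2
      push_cast
      ring
    have h2 : h (A \ K) ≤ 1/(i+2 : ℝ≥0∞) := (measure_mono hsub).trans h1
    have h3 : (1 : ℝ≥0∞)/(i+2) ≤ (i : ℝ≥0∞)⁻¹ := by
      rw [one_div]
      apply ENNReal.inv_le_inv.2
      exact le_trans (by exact_mod_cast Nat.le_add_right i 2) le_rfl
    exact absurd (h2.trans h3) (not_le.2 hi)
  -- the core
  set core : Set B := {x | ∀ n : ↥N, x + ↑n ∈ K} with hcore
  have hcoreK : core ⊆ K := by
    intro x hx
    have := hx (0 : ↥N)
    simpa using this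
  have hcore_closed : IsClosed core := by
    have : coreᶜ = ⋃ n : ↥N, (fun x => x + (n : B)) ⁻¹' Kᶜ := by
      ext x
      simp [hcore, not_forall]
    rw [← isOpen_compl_iff, this]
    exact isOpen_iUnion fun n =>
      hKcomp.isClosed.isOpen_compl.preimage (continuous_id.add continuous_const)
  have hcore_sat : ∀ x ∈ core, ∀ n : ↥N, x + ↑n ∈ core := by
    intro x hx n n'
    rw [add_assoc]
    have : (↑n + ↑n' : B) = ((n + n' : ↥N) : B) := rfl
    rw [this]
    exact hx (n + n')
  have hAcore : h (A \ core) = 0 := core_ae h N hNc hAmeas hAinv hKcomp.isClosed hAK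
  have hcore_big : 1 < h core + εE := by
    have h1 : h A ≤ h (A ∩ core) + h (A \ core) := measure_le_inter_add_diff h A core
    rw [hAcore, add_zero] at h1
    have h2 : h K ≤ h core := le_trans (le_trans (measure_mono hKA) h1)
      (measure_mono inter_subset_right)
    calc (1:ℝ≥0∞) < h K + εE := hKbig
      _ ≤ h core + εE := by exact add_le_add_left h2 _
  have hμcore : μ core = 0 :=
    le_antisymm (le_trans (measure_mono (hcoreK.trans hKs)) hμs.le) (by positivity)
  -- Urysohn functions e j , u j
  have heex : ∀ j : ℕ, ∃ e : C(B, ℝ), EqOn e 0 (core + closure (V (j+1))) ∧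
      EqOn e 1 ((core + V (j+1) + V (j+1))ᶜ) ∧ ∀ x, e x ∈ Icc (0:ℝ) 1 := by
    intro j
    refine exists_continuous_zero_one_of_isCompact
      (hcore_closed.isCompact.add isClosed_closure.isCompact)
      (by
        have : IsOpen (core + V (j+1) + V (j+1)) := (hVo (j+1)).add_left
        exact this.isClosed_compl) ?_
    rw [disjoint_compl_right_iff_subset]
    intro x hx
    obtain ⟨c, hc, w, hw, rfl⟩ := hx
    have : w ∈ V (j+1) + V (j+1) :=
      closure_subset_add (hVo (j+1)) (hV0 (j+1)) (hVsym (j+1)) hw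
    obtain ⟨w1, hw1, w2, hw2, rfl⟩ := this
    show c + (w1 + w2) ∈ core + V (j+1) + V (j+1)
    rw [← add_assoc]
    exact Set.add_mem_add (Set.add_mem_add hc hw1) hw2
  choose e he0 he1 he01 using heex
  set u : ℕ → C(B, ℝ) := fun j => 1 - e j with hu
  have hu01 : ∀ j x, u j x ∈ Icc (0:ℝ) 1 := by
    intro j x
    have := he01 j x
    simp only [hu, ContinuousMap.sub_apply, ContinuousMap.one_apply]
    exact ⟨by linarith [(he01 j x).2], by linarith [(he01 j x).1]⟩
  have hu_core : ∀ j, ∀ x ∈ core, u j x = 1 := by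
    intro j x hx
    have hx' : x ∈ core + closure (V (j+1)) := by
      have := Set.add_mem_add hx (subset_closure (hV0 (j+1)) : (0:B) ∈ closure (V (j+1)))
      simpa using this
    have h0 : e j x = 0 := by simpa using he0 j hx'
    simp only [hu, ContinuousMap.sub_apply, ContinuousMap.one_apply, h0]
    norm_num
  have hu_out : ∀ j, ∀ x, x ∉ core + V (j+1) + V (j+1) → u j x = 0 := by
    intro j x hx
    have h1 : e j x = 1 := by simpa using he1 j (hx : x ∈ (core + V (j+1) + V (j+1))ᶜ)
    simp only [hu, ContinuousMap.sub_apply, ContinuousMap.one_apply, h1]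
    norm_num
  -- intersection identity
  have hinter : (⋂ j, (core + closure (V (j+1)))) ⊆ core := by
    intro x hx
    rcases eq_empty_or_nonempty core with hemp | hne
    · have := mem_iInter.1 hx 0
      rw [hemp] at this
      simp [Set.empty_add] at this
    set T : ℕ → Set B := fun j => {c | c ∈ core ∧ x - c ∈ closure (V (j+1))} with hT
    have hTne : ∀ j, (T j).Nonempty := by
      intro j
      obtain ⟨c, hc, w, hw, hxw⟩ := mem_iInter.1 hx j
      exact ⟨c, hc, by rw [← hxw]; simpa using hw⟩
    have hTclosed : ∀ j, IsClosed (T j) := by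
      intro j
      exact IsClosed.inter hcore_closed
        (isClosed_closure.preimage (continuous_const.sub continuous_id))
    have hTnested : ∀ j, T (j+1) ⊆ T j := by
      intro j c hc
      refine ⟨hc.1, ?_⟩
      have h1 : closure (V (j+2)) ⊆ V (j+2) + V (j+2) :=
        closure_subset_add (hVo (j+2)) (hV0 (j+2)) (hVsym (j+2))
      have h2 : V (j+2) + V (j+2) ⊆ V (j+1) := hVsum (j+1)
      exact subset_closure (h2 (h1 hc.2))
    have hT0 : IsCompact (T 0) :=
      hcore_closed.isCompact.of_isClosed_subset (hTclosed 0) (fun c hc => hc.1)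
    obtain ⟨c, hc⟩ := IsCompact.nonempty_iInter_of_sequence_nonempty_isCompact_isClosed
      T hTnested hTne hT0 hTclosed
    have hcc : c ∈ core := (mem_iInter.1 hc 0).1
    have hxc : x - c ∈ (N : Set B) := by
      refine mem_iInter.2 fun k => ?_
      have h1 : x - c ∈ closure (V (k+1)) := (mem_iInter.1 hc k).2
      have h2 : closure (V (k+1)) ⊆ V (k+1) + V (k+1) :=
        closure_subset_add (hVo (k+1)) (hV0 (k+1)) (hVsym (k+1))
      exact hVsum k (h2 h1)
    have : x = c + (⟨x - c, hxc⟩ : ↥N) := by simp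
    rw [this]
    exact hcore_sat c hcc _
  -- pointwise convergence of u j to indicator of core
  have hu_tendsto : ∀ x, Tendsto (fun j => u j x) atTop (nhds (core.indicator (1 : B → ℝ) x)) := by
    intro x
    by_cases hx : x ∈ core
    · have : ∀ j, u j x = 1 := fun j => hu_core j x hx
      simp only [this, indicator_of_mem hx]
      exact tendsto_const_nhds
    · have hx' : x ∉ ⋂ j, (core + closure (V (j+1))) := fun hmem => hx (hinter hmem)
      obtain ⟨j₀, hj₀⟩ := by
        rw [mem_iInter, not_forall] at hx'
        exact hx'
      have : ∀ j ≥ j₀ + 1, u j x = 0 := by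
        intro j hj
        apply hu_out
        intro hmem
        apply hj₀
        have hsub : core + V (j+1) + V (j+1) ⊆ core + closure (V (j₀+1)) := by
          intro y hy
          obtain ⟨cw, hcw, w2, hw2, rfl⟩ := hy
          obtain ⟨c, hc, w1, hw1, rfl⟩ := hcw
          have hw : w1 + w2 ∈ V j := hVsum j (add_mem_add hw1 hw2)
          have hw' : w1 + w2 ∈ V (j₀+1) := hVmono (by omega) hw
          exact ⟨c, hc, w1 + w2, subset_closure hw', (add_assoc c w1 w2).symm⟩
        exact hsub hmem
      rw [indicator_of_notMem hx]
      exact tendsto_atTop_of_eventually_const (i₀ := j₀ + 1) this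
  -- integral convergence for μ
  have hμint : Tendsto (fun j => ∫ x, u j x ∂μ) atTop
      (nhds (∫ x, core.indicator (1 : B → ℝ) x ∂μ)) := by
    refine tendsto_integral_of_dominated_convergence (fun _ => (1:ℝ))
      (fun j => (u j).continuous.aestronglyMeasurable) (integrable_const 1) ?_ ?_
    · intro j
      refine ae_of_all _ fun x => ?_
      have h1 := hu01 j x
      show ‖u j x‖ ≤ (1:ℝ)
      rw [Real.norm_eq_abs, abs_le]
      exact ⟨by linarith [h1.1], by linarith [h1.2]⟩
    · exact ae_of_all _ hu_tendsto
  have hμlim : ∫ x, core.indicator (1 : B → ℝ) x ∂μ = 0 := by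
    rw [integral_indicator_one hcore_closed.measurableSet, measureReal_def, hμcore]
    simp
  rw [hμlim] at hμint
  have hev : ∀ᶠ j in atTop, ∫ x, u j x ∂μ < δ := hμint.eventually_lt_const hδ
  obtain ⟨j, hj⟩ := hev.exists
  refine ⟨u j, fun x => hu01 j x, hj, ?_⟩
  have hint1 : Integrable (fun x => 1 - u j x) h :=
    integrable_of_continuous h (continuous_const.sub (u j).continuous)
  have hint2 : Integrable (coreᶜ.indicator (1 : B → ℝ)) h :=
    (integrable_const 1).indicator hcore_closed.measurableSet.compl
  have hmono : ∀ x, 1 - u j x ≤ coreᶜ.indicator (1 : B → ℝ) x := by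
    intro x
    by_cases hx : x ∈ core
    · rw [hu_core j x hx, indicator_of_notMem (by simpa using hx)]
      norm_num
    · rw [indicator_of_mem (by simpa using hx)]
      have h1 := (hu01 j x).1
      simp only [Pi.one_apply]
      linarith
  calc ∫ x, (1 - u j x) ∂h ≤ ∫ x, coreᶜ.indicator (1 : B → ℝ) x ∂h :=
        integral_mono hint1 hint2 hmono
    _ = (h coreᶜ).toReal := integral_indicator_one hcore_closed.measurableSet.compl
    _ ≤ εE.toReal := by
        apply ENNReal.toReal_mono (by simp [hεE])
        rw [measure_compl hcore_closed.measurableSet (measure_ne_top _ _), measure_univ,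
          tsub_le_iff_right]
        exact le_of_lt (by rwa [add_comm] at hcore_big)
    _ = δ/2 := by rw [hεE, ENNReal.toReal_ofReal (by linarith)]
    _ < δ := by linarith

theorem mpr_dir (h : Measure B) [IsProbabilityMeasure h] [Measure.IsAddHaarMeasure h]
    (P : ℕ → C(B, ℂ))
    (hnorm : ∀ F : Finset ℕ, ∫ κ, ∏ j ∈ F, ‖P j κ‖ ^ 2 ∂h = 1)
    (μ : Measure B) [IsProbabilityMeasure μ]
    (hweak : ∀ g : C(B, ℝ),
      Tendsto (fun n : ℕ => ∫ κ, g κ * ∏ k ∈ Finset.range (n + 1), ‖P k κ‖ ^ 2 ∂h)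
        atTop (nhds (∫ κ, g κ ∂μ)))
    (hyp : ∀ ε : ℝ, 0 < ε → ∃ F : Finset ℕ, F.Nonempty ∧ ∫ κ, ∏ j ∈ F, ‖P j κ‖ ∂h < ε) :
    μ.MutuallySingular h := by
  have hFex : ∀ m : ℕ, ∃ F : Finset ℕ, F.Nonempty ∧
      ∫ κ, ∏ j ∈ F, ‖P j κ‖ ∂h < (1/8 : ℝ)^m := fun m => hyp _ (by positivity)
  choose F hFne hFint using hFex
  set q : ℕ → B → ℝ := fun m κ => ∏ j ∈ F m, ‖P j κ‖ with hq
  have hqcont : ∀ m, Continuous (q m) := fun m =>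
    continuous_finset_prod _ fun j _ => (P j).continuous.norm
  have hqnonneg : ∀ m κ, 0 ≤ q m κ := fun m κ =>
    Finset.prod_nonneg fun j _ => norm_nonneg _
  set st : ℕ → ℝ := fun m => (1/2 : ℝ)^m with hst
  have hstpos : ∀ m, 0 < st m := fun m => by positivity
  set t : ℕ → ℝ := fun m => (st m)^2 with ht
  have htpos : ∀ m, 0 < t m := fun m => by
    have := hstpos m; positivity
  set g : ℕ → B → ℝ := fun m κ => t m / (t m + (q m κ)^2) with hg
  have hden : ∀ m κ, 0 < t m + (q m κ)^2 := fun m κ => by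
    have h1 := htpos m; positivity
  have hgcont : ∀ m, Continuous (g m) := fun m =>
    continuous_const.div (continuous_const.add ((hqcont m).pow 2))
      (fun κ => (hden m κ).ne')
  have hgpos : ∀ m κ, 0 < g m κ := fun m κ => div_pos (htpos m) (hden m κ)
  have hgle1 : ∀ m κ, g m κ ≤ 1 := fun m κ =>
    (div_le_one (hden m κ)).2 (by nlinarith [sq_nonneg (q m κ)])
  -- Key A : ∫ g_m dμ ≤ t m
  have hKeyA : ∀ m, ∫ κ, g m κ ∂μ ≤ t m := by
    intro m
    have hcont := hgcont m
    refine le_of_tendsto (hweak ⟨g m, hcont⟩) ?_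
    rw [eventually_atTop]
    refine ⟨(F m).max' (hFne m), fun n hn => ?_⟩
    have hsub : F m ⊆ Finset.range (n+1) := by
      intro j hj
      rw [Finset.mem_range]
      exact lt_of_le_of_lt (le_trans ((F m).le_max' j hj) hn) (Nat.lt_succ_self n)
    have hptwise : ∀ κ, g m κ * ∏ k ∈ Finset.range (n+1), ‖P k κ‖^2
        ≤ t m * ∏ k ∈ Finset.range (n+1) \ F m, ‖P k κ‖^2 := by
      intro κ
      have hsplit : (∏ k ∈ Finset.range (n+1), ‖P k κ‖^2)
          = (∏ k ∈ Finset.range (n+1) \ F m, ‖P k κ‖^2) * (q m κ)^2 := by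
        rw [hq]
        simp only
        rw [← Finset.prod_pow]
        exact (Finset.prod_sdiff hsub).symm
      rw [hsplit]
      have hR : (0:ℝ) ≤ ∏ k ∈ Finset.range (n+1) \ F m, ‖P k κ‖^2 :=
        Finset.prod_nonneg fun k _ => sq_nonneg _
      have hgq : g m κ * (q m κ)^2 ≤ t m := by
        rw [hg]
        simp only
        rw [div_mul_eq_mul_div, div_le_iff₀ (hden m κ)]
        nlinarith [sq_nonneg (q m κ), (htpos m).le]
      calc g m κ * ((∏ k ∈ Finset.range (n+1) \ F m, ‖P k κ‖^2) * (q m κ)^2)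
          = (g m κ * (q m κ)^2) * ∏ k ∈ Finset.range (n+1) \ F m, ‖P k κ‖^2 := by ring
        _ ≤ t m * ∏ k ∈ Finset.range (n+1) \ F m, ‖P k κ‖^2 :=
            mul_le_mul_of_nonneg_right hgq hR
    have hint1 : Integrable (fun κ => g m κ * ∏ k ∈ Finset.range (n+1), ‖P k κ‖^2) h :=
      integrable_of_continuous h ((hgcont m).mul
        (continuous_finset_prod _ fun k _ => ((P k).continuous.norm.pow 2)))
    have hint2 : Integrable (fun κ => t m * ∏ k ∈ Finset.range (n+1) \ F m, ‖P k κ‖^2) h :=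
      integrable_of_continuous h (continuous_const.mul
        (continuous_finset_prod _ fun k _ => ((P k).continuous.norm.pow 2)))
    calc ∫ κ, (⟨g m, hcont⟩ : C(B,ℝ)) κ * ∏ k ∈ Finset.range (n+1), ‖P k κ‖^2 ∂h
        = ∫ κ, g m κ * ∏ k ∈ Finset.range (n+1), ‖P k κ‖^2 ∂h := rfl
      _ ≤ ∫ κ, t m * ∏ k ∈ Finset.range (n+1) \ F m, ‖P k κ‖^2 ∂h :=
          integral_mono hint1 hint2 hptwise
      _ = t m * ∫ κ, ∏ k ∈ Finset.range (n+1) \ F m, ‖P k κ‖^2 ∂h := integral_const_mul _ _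
      _ = t m := by rw [hnorm (Finset.range (n+1) \ F m), mul_one]
  -- Key B : ∫ (1 - g m) dh ≤ (1/2) * (1/4)^m
  have hKeyB : ∀ m, ∫ κ, (1 - g m κ) ∂h ≤ (1/2) * (1/4 : ℝ)^m := by
    intro m
    have hptwise : ∀ κ, 1 - g m κ ≤ q m κ / (2 * st m) := by
      intro κ
      have h1 : 1 - g m κ = (q m κ)^2 / (t m + (q m κ)^2) := by
        rw [hg]
        simp only
        rw [eq_div_iff (hden m κ).ne', sub_mul, div_mul_cancel₀ _ (hden m κ).ne']
        ring
      rw [h1, div_le_div_iff₀ (hden m κ) (by positivity : (0:ℝ) < 2 * st m)]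
      have h2 := hqnonneg m κ
      have h3 := hstpos m
      have h4 : t m = (st m)^2 := rfl
      rw [h4]
      nlinarith [mul_nonneg h2 (sq_nonneg (q m κ - st m))]
    have hint1 : Integrable (fun κ => 1 - g m κ) h :=
      integrable_of_continuous h (continuous_const.sub (hgcont m))
    have hint2 : Integrable (fun κ => q m κ / (2 * st m)) h :=
      integrable_of_continuous h ((hqcont m).div_const _)
    have hstne : (st m) ≠ 0 := (hstpos m).ne'
    calc ∫ κ, (1 - g m κ) ∂h ≤ ∫ κ, q m κ / (2 * st m) ∂h :=
          integral_mono hint1 hint2 hptwise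
      _ = (∫ κ, q m κ ∂h) / (2 * st m) := integral_div _ _
      _ ≤ (1/8:ℝ)^m / (2 * st m) := by
          apply (div_le_div_iff_of_pos_right (by positivity)).2
          exact (hFint m).le
      _ = (1/2) * (1/4 : ℝ)^m := by
          rw [hst]
          simp only
          rw [show (1/8:ℝ)^m = (1/4:ℝ)^m * (1/2:ℝ)^m by rw [← mul_pow]; norm_num]
          have hne : ((1:ℝ)/2)^m ≠ 0 := by positivity
          field_simp
  -- Markov bounds
  have hμA : ∀ m, μ {κ | st m ≤ g m κ} ≤ ENNReal.ofReal (st m) := by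
    intro m
    have hMar := mul_meas_ge_le_integral_of_nonneg
      (ae_of_all μ fun κ => (hgpos m κ).le) (integrable_of_continuous μ (hgcont m)) (st m)
    have h2 : st m * (μ {κ | st m ≤ g m κ}).toReal ≤ (st m)^2 := le_trans hMar (hKeyA m)
    have h3 : (μ {κ | st m ≤ g m κ}).toReal ≤ st m := by
      have h4 := hstpos m
      nlinarith [h2]
    rw [ENNReal.le_ofReal_iff_toReal_le (measure_ne_top _ _) (hstpos m).le]
    exact h3
  have hhB : ∀ m, h {κ | st m ≤ 1 - g m κ} ≤ ENNReal.ofReal (st m) := by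
    intro m
    have hMar := mul_meas_ge_le_integral_of_nonneg
      (ae_of_all h fun κ => (sub_nonneg.2 (hgle1 m κ)))
      (integrable_of_continuous h (continuous_const.sub (hgcont m))) (st m)
    have h2 : st m * (h {κ | st m ≤ 1 - g m κ}).toReal ≤ (1/2)*(1/4:ℝ)^m :=
      le_trans hMar (hKeyB m)
    have h3 : (h {κ | st m ≤ 1 - g m κ}).toReal ≤ st m := by
      have h4 := hstpos m
      have h5 : (1/4:ℝ)^m = (st m)^2 := by
        rw [hst]
        simp only
        rw [show (1/4:ℝ) = (1/2)*(1/2) by norm_num, mul_pow]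
        ring
      rw [h5] at h2
      nlinarith [ENNReal.toReal_nonneg (a := h {κ | st m ≤ 1 - g m κ})]
    rw [ENNReal.le_ofReal_iff_toReal_le (measure_ne_top _ _) (hstpos m).le]
    exact h3
  -- the singular set
  set Sset : Set B := ⋂ m, ⋃ k, {κ | st (m+k) ≤ g (m+k) κ} with hSset
  have hAclosed : ∀ m, IsClosed {κ | st m ≤ g m κ} :=
    fun m => isClosed_le continuous_const (hgcont m)
  have hSmeas : MeasurableSet Sset :=
    MeasurableSet.iInter fun m => MeasurableSet.iUnion fun k => (hAclosed (m+k)).measurableSet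
  have hstsum : ∀ m k : ℕ, st (m + k) = st m * st k := by
    intro m k
    rw [hst]
    simp only
    rw [pow_add]
  have hμS : μ Sset = 0 := by
    refine eq_zero_of_forall_le_ofReal_pow (measure_ne_top _ _) 2 ?_
    intro m
    have h1 : μ Sset ≤ ∑' k, μ {κ | st (m+k) ≤ g (m+k) κ} :=
      le_trans (measure_mono (iInter_subset _ m)) (measure_iUnion_le _)
    have h2 : ∑' k : ℕ, μ {κ | st (m+k) ≤ g (m+k) κ} ≤ ∑' k : ℕ, ENNReal.ofReal (st (m+k)) :=
      ENNReal.tsum_le_tsum (fun k => hμA (m+k))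
    have h3 : ∑' k : ℕ, ENNReal.ofReal (st (m+k)) = ENNReal.ofReal (2 * (1/2:ℝ)^m) := by
      have hsummable : Summable (fun k : ℕ => st (m+k)) := by
        have : (fun k : ℕ => st (m+k)) = fun k => st m * st k := by
          funext k; exact hstsum m k
        rw [this, hst]
        exact (summable_geometric_of_lt_one (by norm_num) (by norm_num)).mul_left _
      rw [← ENNReal.ofReal_tsum_of_nonneg (fun k => (hstpos (m+k)).le) hsummable]
      congr 1
      have heq : (fun k : ℕ => st (m+k)) = fun k => st m * st k := by
        funext k; exact hstsum m k
      rw [heq, tsum_mul_left]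
      rw [hst]
      simp only
      rw [tsum_geometric_two]
      ring
    calc μ Sset ≤ ∑' k : ℕ, ENNReal.ofReal (st (m+k)) := le_trans h1 h2
      _ = ENNReal.ofReal (2 * (1/2:ℝ)^m) := h3
  have hhS : h Ssetᶜ = 0 := by
    rw [hSset, compl_iInter]
    refine measure_iUnion_null fun m => ?_
    rw [compl_iUnion]
    have hsub : (⋂ k, {κ | st (m+k) ≤ g (m+k) κ}ᶜ)
        ⊆ ⋂ k, {κ | st (m+k+1) ≤ 1 - g (m+k+1) κ} := by
      intro x hx
      refine mem_iInter.2 fun k => ?_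
      have hxk := mem_iInter.1 hx (k+1)
      simp only [mem_compl_iff, mem_setOf_eq, not_le] at hxk
      have hidx : m + (k+1) = m+k+1 := by ring
      rw [hidx] at hxk
      show st (m+k+1) ≤ 1 - g (m+k+1) x
      have h1 : st (m+k+1) ≤ 1/2 := by
        rw [hst]
        simp only
        calc ((1:ℝ)/2)^(m+k+1) ≤ ((1:ℝ)/2)^1 :=
              pow_le_pow_of_le_one (by norm_num) (by norm_num) (by omega)
          _ = 1/2 := by norm_num
      linarith
    refine measure_mono_null hsub ?_
    refine eq_zero_of_forall_le_ofReal_pow (measure_ne_top _ _) (st (m+1)) ?_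
    intro k
    have h1 : h (⋂ k, {κ | st (m+k+1) ≤ 1 - g (m+k+1) κ}) ≤ ENNReal.ofReal (st (m+k+1)) :=
      le_trans (measure_mono (iInter_subset _ k)) (hhB (m+k+1))
    have h2 : st (m+k+1) = st (m+1) * (1/2:ℝ)^k := by
      have : m + k + 1 = (m+1) + k := by ring
      rw [this, hstsum (m+1) k, hst]
    rwa [h2] at h1
  exact ⟨Sset, hSmeas, hμS, hhS⟩

theorem mp_dir (h : Measure B) [IsProbabilityMeasure h] [Measure.IsAddHaarMeasure h]
    (P : ℕ → C(B, ℂ))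
    (hnorm : ∀ F : Finset ℕ, ∫ κ, ∏ j ∈ F, ‖P j κ‖ ^ 2 ∂h = 1)
    (μ : Measure B) [IsProbabilityMeasure μ]
    (hweak : ∀ g : C(B, ℝ),
      Tendsto (fun n : ℕ => ∫ κ, g κ * ∏ k ∈ Finset.range (n + 1), ‖P k κ‖ ^ 2 ∂h)
        atTop (nhds (∫ κ, g κ ∂μ)))
    (hsing : μ.MutuallySingular h) :
    ∀ ε : ℝ, 0 < ε → ∃ F : Finset ℕ, F.Nonempty ∧ ∫ κ, ∏ j ∈ F, ‖P j κ‖ ∂h < ε := by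
  intro ε hε
  set δ₀ : ℝ := ε^2/16 with hδ₀
  have hδ₀pos : 0 < δ₀ := by positivity
  obtain ⟨u, hu01, huμ, h1u⟩ := exists_separating h μ hsing hδ₀pos
  have hev : ∀ᶠ n : ℕ in atTop,
      ∫ κ, u κ * ∏ k ∈ Finset.range (n + 1), ‖P k κ‖ ^ 2 ∂h < δ₀ :=
    (hweak u).eventually_lt_const huμ
  obtain ⟨n, hn⟩ := hev.exists
  refine ⟨Finset.range (n+1), Finset.nonempty_range_add_one, ?_⟩
  -- notation
  set Q : B → ℝ := fun κ => ∏ j ∈ Finset.range (n+1), ‖P j κ‖ with hQ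
  have hQcont : Continuous Q := continuous_finset_prod _ fun j _ => (P j).continuous.norm
  have hQnonneg : ∀ κ, 0 ≤ Q κ := fun κ => Finset.prod_nonneg fun j _ => norm_nonneg _
  have hQ2 : ∀ κ, (Q κ)^2 = ∏ k ∈ Finset.range (n+1), ‖P k κ‖^2 := by
    intro κ
    rw [hQ]
    simp only
    rw [Finset.prod_pow]
  set a : ℝ := 4/ε with ha
  set b : ℝ := ε/4 with hb
  have hapos : 0 < a := by positivity
  have hbpos : 0 < b := by positivity
  -- split ∫Q
  have hintQu : Integrable (fun κ => Q κ * u κ) h :=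
    integrable_of_continuous h (hQcont.mul u.continuous)
  have hintQ1u : Integrable (fun κ => Q κ * (1 - u κ)) h :=
    integrable_of_continuous h (hQcont.mul (continuous_const.sub u.continuous))
  have hcont1 : Continuous fun κ => (Q κ)^2 * u κ := (hQcont.pow 2).mul u.continuous
  have hcont2 : Continuous fun κ => (Q κ)^2 * (1 - u κ) :=
    (hQcont.pow 2).mul (continuous_const.sub u.continuous)
  -- integral facts
  have hI1 : ∫ κ, (Q κ)^2 * u κ ∂h < δ₀ := by
    have heq : (fun κ => (Q κ)^2 * u κ)
        = fun κ => u κ * ∏ k ∈ Finset.range (n+1), ‖P k κ‖^2 := by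
      funext κ
      rw [← hQ2 κ, mul_comm]
    rw [heq]
    exact hn
  have hI2 : ∫ κ, u κ ∂h ≤ 1 := by
    have := integral_mono (integrable_of_continuous h u.continuous) (integrable_const 1)
      (fun κ => (hu01 κ).2)
    simpa using this
  have hI3 : ∫ κ, (Q κ)^2 * (1 - u κ) ∂h ≤ 1 := by
    have hpt3 : ∀ κ, (Q κ)^2 * (1 - u κ) ≤ (Q κ)^2 := by
      intro κ
      have h1 := (hu01 κ).1
      have h2 := (hu01 κ).2
      nlinarith [sq_nonneg (Q κ)]
    have hQ2int : ∫ κ, (Q κ)^2 ∂h = 1 := by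
      have heq : (fun κ => (Q κ)^2) = fun κ => ∏ k ∈ Finset.range (n+1), ‖P k κ‖^2 := by
        funext κ; exact hQ2 κ
      rw [heq]
      exact hnorm _
    calc ∫ κ, (Q κ)^2 * (1 - u κ) ∂h ≤ ∫ κ, (Q κ)^2 ∂h :=
          integral_mono (integrable_of_continuous h hcont2)
            (integrable_of_continuous h (hQcont.pow 2)) hpt3
      _ = 1 := hQ2int
  have hI4 : ∫ κ, (1 - u κ) ∂h < δ₀ := h1u
  -- first half bound
  have hhalf1 : ∫ κ, Q κ * u κ ∂h ≤ (a * (∫ κ, (Q κ)^2 * u κ ∂h) + (1/a) * (∫ κ, u κ ∂h))/2 := by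
    have hpt : ∀ κ, Q κ * u κ ≤ (a * ((Q κ)^2 * u κ) + (1/a) * u κ)/2 := by
      intro κ
      have h1 := (hu01 κ).1
      have e1 : (1/a) * ((a * Q κ - 1)^2 * u κ) = a * ((Q κ)^2 * u κ) - 2 * (Q κ * u κ)
          + (1/a) * u κ := by
        field_simp
        ring
      have k1 : 0 ≤ a * ((Q κ)^2 * u κ) - 2 * (Q κ * u κ) + (1/a) * u κ := by
        rw [← e1]
        exact mul_nonneg (by positivity) (mul_nonneg (sq_nonneg _) h1)
      linarith
    have hlin : ∫ κ, (a * ((Q κ)^2 * u κ) + (1/a) * u κ)/2 ∂h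
        = (a * (∫ κ, (Q κ)^2 * u κ ∂h) + (1/a) * (∫ κ, u κ ∂h))/2 := by
      rw [integral_div]
      congr 1
      rw [integral_add ((integrable_of_continuous h hcont1).const_mul a)
        ((integrable_of_continuous h u.continuous).const_mul (1/a)),
        integral_const_mul, integral_const_mul]
    calc ∫ κ, Q κ * u κ ∂h ≤ ∫ κ, (a * ((Q κ)^2 * u κ) + (1/a) * u κ)/2 ∂h :=
          integral_mono hintQu (integrable_of_continuous h (by fun_prop)) hpt
      _ = _ := hlin
  -- second half bound
  have hhalf2 : ∫ κ, Q κ * (1 - u κ) ∂h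
      ≤ (b * (∫ κ, (Q κ)^2 * (1 - u κ) ∂h) + (1/b) * (∫ κ, (1 - u κ) ∂h))/2 := by
    have hpt : ∀ κ, Q κ * (1 - u κ) ≤ (b * ((Q κ)^2 * (1 - u κ)) + (1/b) * (1 - u κ))/2 := by
      intro κ
      have h2 := (hu01 κ).2
      have e2 : (1/b) * ((b * Q κ - 1)^2 * (1 - u κ)) = b * ((Q κ)^2 * (1 - u κ))
          - 2 * (Q κ * (1 - u κ)) + (1/b) * (1 - u κ) := by
        field_simp
        ring
      have k2 : 0 ≤ b * ((Q κ)^2 * (1 - u κ)) - 2 * (Q κ * (1 - u κ)) + (1/b) * (1 - u κ) := by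
        rw [← e2]
        exact mul_nonneg (by positivity) (mul_nonneg (sq_nonneg _) (by linarith))
      linarith
    have hlin : ∫ κ, (b * ((Q κ)^2 * (1 - u κ)) + (1/b) * (1 - u κ))/2 ∂h
        = (b * (∫ κ, (Q κ)^2 * (1 - u κ) ∂h) + (1/b) * (∫ κ, (1 - u κ) ∂h))/2 := by
      rw [integral_div]
      congr 1
      rw [integral_add ((integrable_of_continuous h hcont2).const_mul b)
        ((integrable_of_continuous h (g := fun κ => 1 - u κ) (continuous_const.sub u.continuous)).const_mul (1/b)),
        integral_const_mul, integral_const_mul]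
    calc ∫ κ, Q κ * (1 - u κ) ∂h
        ≤ ∫ κ, (b * ((Q κ)^2 * (1 - u κ)) + (1/b) * (1 - u κ))/2 ∂h :=
          integral_mono hintQ1u (integrable_of_continuous h (by fun_prop)) hpt
      _ = _ := hlin
  -- combine
  have hsplitQ : ∫ κ, Q κ ∂h = ∫ κ, Q κ * u κ ∂h + ∫ κ, Q κ * (1 - u κ) ∂h := by
    rw [← integral_add hintQu hintQ1u]
    apply integral_congr_ae
    refine ae_of_all _ fun κ => ?_
    ring
  have harith : (a * δ₀ + (1/a) * 1)/2 + (b * 1 + (1/b) * δ₀)/2 = ε/2 := by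
    rw [ha, hb, hδ₀]
    field_simp
    ring
  have hbnd1 : (a * (∫ κ, (Q κ)^2 * u κ ∂h) + (1/a) * (∫ κ, u κ ∂h))/2
      < (a * δ₀ + (1/a) * 1)/2 := by
    have hb1 : 0 < 1/a := by positivity
    nlinarith [hI1, hI2]
  have hbnd2 : (b * (∫ κ, (Q κ)^2 * (1 - u κ) ∂h) + (1/b) * (∫ κ, (1 - u κ) ∂h))/2
      ≤ (b * 1 + (1/b) * δ₀)/2 := by
    have hb2 : 0 < 1/b := by positivity
    nlinarith [hI3, hI4]
  calc ∫ κ, Q κ ∂h = ∫ κ, Q κ * u κ ∂h + ∫ κ, Q κ * (1 - u κ) ∂h := hsplitQ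
    _ < (a * δ₀ + (1/a) * 1)/2 + (b * 1 + (1/b) * δ₀)/2 := by
        have := hhalf1.trans_lt hbnd1
        have := hhalf2.trans hbnd2
        linarith
    _ = ε/2 := harith
    _ < ε := by linarith

end Aux

end BourgainAux

end AuxiliarySection

/-- Bourgain criterion on the Bohr compactification of `ℝ`: the generalized Riesz product
`μ = ∏_{k=0}^∞ |P_k|² dh` (the weak limit of the partial products against the Haar
probability measure `h`) is singular with respect to `h` if and only if
`inf { ∫ ∏_{ℓ=1}^L |P_{n_ℓ}| dh : L ∈ ℕ, n₁ < … < n_L } = 0`. -/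
theorem bourgain_criterion
    {B : Type*} [TopologicalSpace B] [CompactSpace B] [T2Space B] [AddCommGroup B]
    [IsTopologicalAddGroup B] [MeasurableSpace B] [BorelSpace B]
    (h : Measure B) [IsProbabilityMeasure h] [Measure.IsAddHaarMeasure h]
    (P : ℕ → C(B, ℂ))
    (hnorm : ∀ F : Finset ℕ, ∫ κ, ∏ j ∈ F, ‖P j κ‖ ^ 2 ∂h = 1)
    (μ : Measure B) [IsProbabilityMeasure μ]
    (hweak : ∀ g : C(B, ℝ),
      Tendsto (fun n : ℕ => ∫ κ, g κ * ∏ k ∈ Finset.range (n + 1), ‖P k κ‖ ^ 2 ∂h)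
        atTop (nhds (∫ κ, g κ ∂μ))) :
    μ ⟂ₘ h ↔
      ∀ ε : ℝ, 0 < ε → ∃ F : Finset ℕ, F.Nonempty ∧ ∫ κ, ∏ j ∈ F, ‖P j κ‖ ∂h < ε := by
  constructor
  · intro hsing
    exact BourgainAux.mp_dir h P hnorm μ hweak hsing
  · intro hyp
    exact BourgainAux.mpr_dir h P hnorm μ hweak hyp
end
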